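/- arXiv:1208.2124 — 4 statements merged into one kernel-verified Lean document; each statement's English description precedes it below -/
import Mathlib

section
/- Let G be a finite group acting ergodically on a von Neumann algebra 𝔄 via a unitary representation U. Then there exists a finite family p_1, …, p_n of minimal projections of 𝔄 that are pairwise orthogonal (p_i p_j = 0 for i ≠ j) and satisfy p_1 + p_2 + ⋯ + p_n = 1 (the identity operator on H). -/
variable {H : Type*} [NormedAddCommGroup H] [InnerProductSpace ℂ H] [CompleteSpace H]

/-- A projection on a Hilbert space: a self-adjoint idempotent bounded operator. -/
def IsProjectionCLM (p : H →L[ℂ] H) : Prop := IsSelfAdjoint p ∧ IsIdempotentElem p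

/-- A minimal projection of a von Neumann algebra `𝔄`: a nonzero projection `p ∈ 𝔄` such that
every projection `e ∈ 𝔄` whose range is contained in the range of `p` is `0` or `p`. -/
def IsMinimalProjectionIn (𝔄 : VonNeumannAlgebra H) (p : H →L[ℂ] H) : Prop :=
  IsProjectionCLM p ∧ p ∈ 𝔄 ∧ p ≠ 0 ∧
    ∀ e : H →L[ℂ] H, IsProjectionCLM e → e ∈ 𝔄 →
      LinearMap.range (e : H →ₗ[ℂ] H) ≤ LinearMap.range (p : H →ₗ[ℂ] H) → e = 0 ∨ e = p

namespace ErgodicAux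

open ContinuousLinearMap

local notation "⟪" x ", " y "⟫" => @inner ℂ _ _ x y

lemma proj_apply_apply {p : H →L[ℂ] H} (hp : IsProjectionCLM p) (y : H) : p (p y) = p y := by
  calc p (p y) = (p * p) y := rfl
  _ = p y := by rw [hp.2.eq]

lemma inner_proj {p : H →L[ℂ] H} (hp : IsProjectionCLM p) (y : H) :
    ⟪p y, y⟫ = (‖p y‖ : ℂ)^2 := by
  calc ⟪p y, y⟫ = ⟪p (p y), y⟫ := by rw [proj_apply_apply hp]
  _ = ⟪adjoint p (p y), y⟫ := by rw [← star_eq_adjoint, hp.1.star_eq]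
  _ = ⟪p y, p y⟫ := adjoint_inner_left _ _ _
  _ = (‖p y‖ : ℂ)^2 := inner_self_eq_norm_sq_to_K _

lemma range_le_imp {p e : H →L[ℂ] H} (hp : IsProjectionCLM p)
    (h : LinearMap.range (e : H →ₗ[ℂ] H) ≤ LinearMap.range (p : H →ₗ[ℂ] H)) : p * e = e := by
  ext x
  obtain ⟨z, hz⟩ := h (LinearMap.mem_range_self _ x)
  calc (p * e) x = p (e x) := rfl
  _ = p (p z) := by rw [show p z = e x from hz]
  _ = p z := proj_apply_apply hp z
  _ = e x := hz

lemma imp_range_le {p e : H →L[ℂ] H} (h : p * e = e) :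
    LinearMap.range (e : H →ₗ[ℂ] H) ≤ LinearMap.range (p : H →ₗ[ℂ] H) := by
  rintro x ⟨z, rfl⟩
  refine ⟨e z, ?_⟩
  conv_rhs => rw [← h]
  rfl

lemma le_symm {q e : H →L[ℂ] H} (hq : IsProjectionCLM q) (he : IsProjectionCLM e)
    (h : q * e = e) : e * q = e := by
  have := congrArg star h
  rwa [star_mul, hq.1.star_eq, he.1.star_eq] at this

lemma proj_sub {q e : H →L[ℂ] H} (hq : IsProjectionCLM q) (he : IsProjectionCLM e)
    (h : q * e = e) : IsProjectionCLM (q - e) := by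
  refine ⟨hq.1.sub he.1, ?_⟩
  have h' := le_symm hq he h
  show (q - e) * (q - e) = q - e
  rw [sub_mul, mul_sub, mul_sub, hq.2.eq, he.2.eq, h, h']
  abel

lemma proj_one : IsProjectionCLM (1 : H →L[ℂ] H) := ⟨(IsSelfAdjoint.one _), IsIdempotentElem.one⟩

lemma exists_unit_fixed {p : H →L[ℂ] H} (hp : IsProjectionCLM p) (hp0 : p ≠ 0) :
    ∃ x : H, ‖x‖ = 1 ∧ p x = x := by
  have hv : ∃ v, p v ≠ 0 := by
    by_contra h
    push_neg at h
    exact hp0 (by ext v; simpa using h v)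
  obtain ⟨v, hv⟩ := hv
  refine ⟨‖p v‖⁻¹ • p v, ?_, ?_⟩
  · rw [norm_smul, norm_inv, norm_norm, inv_mul_cancel₀ (norm_ne_zero_iff.mpr hv)]
  · rw [ContinuousLinearMap.map_smul_of_tower]; rw [proj_apply_apply hp]

variable {G : Type*} [Group G] [Fintype G]

lemma avg_scalar (𝔄 : VonNeumannAlgebra H) (U : G →* unitary (H →L[ℂ] H))
    (hinv : ∀ T ∈ 𝔄, ∀ s : G, (U s : H →L[ℂ] H) * T * star (U s : H →L[ℂ] H) ∈ 𝔄)
    (herg : ∀ T ∈ 𝔄,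
      (∀ s : G, (U s : H →L[ℂ] H) * T * star (U s : H →L[ℂ] H) = T) →
      ∃ c : ℂ, T = c • (1 : H →L[ℂ] H))
    {T : H →L[ℂ] H} (hT : T ∈ 𝔄) :
    ∃ c : ℂ, ∑ s : G, (U s : H →L[ℂ] H) * T * star (U s : H →L[ℂ] H) = c • 1 := by
  set S : H →L[ℂ] H := ∑ s : G, (U s : H →L[ℂ] H) * T * star (U s : H →L[ℂ] H) with hS
  have hSA : S ∈ 𝔄 := sum_mem fun s _ => hinv T hT s
  have hSinv : ∀ t : G, (U t : H →L[ℂ] H) * S * star (U t : H →L[ℂ] H) = S := by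
    intro t
    rw [hS, Finset.mul_sum, Finset.sum_mul]
    calc ∑ s : G, (U t : H →L[ℂ] H) *
          ((U s : H →L[ℂ] H) * T * star (U s : H →L[ℂ] H)) * star (U t : H →L[ℂ] H)
        = ∑ s : G, (U (t * s) : H →L[ℂ] H) * T * star (U (t * s) : H →L[ℂ] H) := by
          refine Finset.sum_congr rfl fun s _ => ?_
          have hc : (U (t * s) : H →L[ℂ] H) = (U t : H →L[ℂ] H) * (U s : H →L[ℂ] H) := by
            rw [map_mul]; rfl
          rw [hc, star_mul]
          simp only [mul_assoc]
      _ = S := by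
          rw [hS]
          exact Fintype.sum_equiv (Equiv.mulLeft t) _ _ (fun s => rfl)
  obtain ⟨c, hc⟩ := herg S hSA hSinv
  exact ⟨c, hc⟩

/-- The (unnormalized) functional built from the vector `u`. -/
noncomputable def phi (U : G →* unitary (H →L[ℂ] H)) (u : H) (T : H →L[ℂ] H) : ℝ :=
  ∑ s : G, (⟪T ((star (U s : H →L[ℂ] H)) u), (star (U s : H →L[ℂ] H)) u⟫).re

lemma phi_add (U : G →* unitary (H →L[ℂ] H)) (u : H) (S T : H →L[ℂ] H) :
    phi U u (S + T) = phi U u S + phi U u T := by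
  simp [phi, inner_add_left, Finset.sum_add_distrib]

lemma phi_proj_nonneg (U : G →* unitary (H →L[ℂ] H)) (u : H) {p : H →L[ℂ] H}
    (hp : IsProjectionCLM p) : 0 ≤ phi U u p := by
  refine Finset.sum_nonneg fun s _ => ?_
  rw [inner_proj hp, ← Complex.ofReal_pow, Complex.ofReal_re]
  positivity

lemma inner_unit (U : G →* unitary (H →L[ℂ] H)) (u : H) (hu : ‖u‖ = 1) (s : G) :
    ⟪(star (U s : H →L[ℂ] H)) u, (star (U s : H →L[ℂ] H)) u⟫ = 1 := by
  have h1 : (U s : H →L[ℂ] H) * star (U s : H →L[ℂ] H) = 1 :=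
    (Unitary.mem_iff.mp (U s).prop).2
  calc ⟪(star (U s : H →L[ℂ] H)) u, (star (U s : H →L[ℂ] H)) u⟫
      = ⟪(adjoint (U s : H →L[ℂ] H)) u, (adjoint (U s : H →L[ℂ] H)) u⟫ := by
        rw [star_eq_adjoint]
    _ = ⟪u, (U s : H →L[ℂ] H) ((adjoint (U s : H →L[ℂ] H)) u)⟫ := adjoint_inner_left _ _ _
    _ = ⟪u, ((U s : H →L[ℂ] H) * star (U s : H →L[ℂ] H)) u⟫ := by rw [star_eq_adjoint]; rfl
    _ = ⟪u, u⟫ := by rw [h1]; rfl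
    _ = 1 := by rw [inner_self_eq_norm_sq_to_K, hu]; norm_num

lemma phi_one (U : G →* unitary (H →L[ℂ] H)) (u : H) (hu : ‖u‖ = 1) :
    phi U u (1 : H →L[ℂ] H) = Fintype.card G := by
  simp only [phi, ContinuousLinearMap.one_apply, inner_unit U u hu]
  simp

lemma sum_inner_conj (U : G →* unitary (H →L[ℂ] H)) (u : H) (hu : ‖u‖ = 1)
    {T : H →L[ℂ] H} {c : ℂ}
    (hc : ∑ s : G, (U s : H →L[ℂ] H) * T * star (U s : H →L[ℂ] H) = c • 1) :
    ∑ s : G, ⟪T ((star (U s : H →L[ℂ] H)) u), (star (U s : H →L[ℂ] H)) u⟫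
      = (starRingEnd ℂ) c := by
  have key : ∀ s : G, ⟪T ((star (U s : H →L[ℂ] H)) u), (star (U s : H →L[ℂ] H)) u⟫
      = ⟪((U s : H →L[ℂ] H) * T * star (U s : H →L[ℂ] H)) u, u⟫ := by
    intro s
    rw [star_eq_adjoint, adjoint_inner_right]
    rfl
  calc ∑ s : G, ⟪T ((star (U s : H →L[ℂ] H)) u), (star (U s : H →L[ℂ] H)) u⟫
      = ∑ s : G, ⟪((U s : H →L[ℂ] H) * T * star (U s : H →L[ℂ] H)) u, u⟫ :=
        Finset.sum_congr rfl fun s _ => key s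
    _ = ⟪(∑ s : G, (U s : H →L[ℂ] H) * T * star (U s : H →L[ℂ] H)) u, u⟫ := by
        rw [ContinuousLinearMap.sum_apply, sum_inner]
    _ = ⟪(c • (1 : H →L[ℂ] H)) u, u⟫ := by rw [hc]
    _ = ⟪c • u, u⟫ := rfl
    _ = (starRingEnd ℂ) c * ⟪u, u⟫ := inner_smul_left _ _ _
    _ = (starRingEnd ℂ) c := by rw [inner_self_eq_norm_sq_to_K, hu]; norm_num

lemma phi_proj_ge_one (𝔄 : VonNeumannAlgebra H) (U : G →* unitary (H →L[ℂ] H))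
    (hinv : ∀ T ∈ 𝔄, ∀ s : G, (U s : H →L[ℂ] H) * T * star (U s : H →L[ℂ] H) ∈ 𝔄)
    (herg : ∀ T ∈ 𝔄,
      (∀ s : G, (U s : H →L[ℂ] H) * T * star (U s : H →L[ℂ] H) = T) →
      ∃ c : ℂ, T = c • (1 : H →L[ℂ] H))
    (u : H) (hu : ‖u‖ = 1)
    {p : H →L[ℂ] H} (hp : IsProjectionCLM p) (hpA : p ∈ 𝔄) (hp0 : p ≠ 0) :
    1 ≤ phi U u p := by
  obtain ⟨c, hc⟩ := avg_scalar 𝔄 U hinv herg hpA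
  have h1 : phi U u p = ((starRingEnd ℂ) c).re := by
    rw [phi, ← Complex.re_sum, sum_inner_conj U u hu hc]
  obtain ⟨x, hx, hpx⟩ := exists_unit_fixed hp hp0
  have h2 : ∑ s : G, ⟪p ((star (U s : H →L[ℂ] H)) x), (star (U s : H →L[ℂ] H)) x⟫
      = (starRingEnd ℂ) c := sum_inner_conj U x hx hc
  have h3 : ((starRingEnd ℂ) c).re
      = ∑ s : G, (⟪p ((star (U s : H →L[ℂ] H)) x), (star (U s : H →L[ℂ] H)) x⟫).re := by
    rw [← Complex.re_sum, h2]
  have hterm : (⟪p ((star (U (1 : G) : H →L[ℂ] H)) x), (star (U (1 : G) : H →L[ℂ] H)) x⟫).re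
      = 1 := by
    have hU1 : (U (1 : G) : H →L[ℂ] H) = 1 := by rw [map_one U]; rfl
    rw [hU1]
    have : (star (1 : H →L[ℂ] H)) x = x := by rw [star_one]; rfl
    rw [this, hpx, inner_self_eq_norm_sq_to_K, hx]
    norm_num
  have hnn : ∀ s ∈ Finset.univ, (0:ℝ) ≤
      (⟪p ((star (U s : H →L[ℂ] H)) x), (star (U s : H →L[ℂ] H)) x⟫).re := by
    intro s _
    rw [inner_proj hp, ← Complex.ofReal_pow, Complex.ofReal_re]
    positivity
  have := Finset.single_le_sum hnn (Finset.mem_univ (1 : G))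
  rw [hterm] at this
  rw [h1, h3]
  exact this

end ErgodicAux

section Main

open ErgodicAux

/-- If a finite group `G` acts ergodically on a von Neumann algebra `𝔄` via a unitary
representation `U`, then there is a finite family of pairwise orthogonal minimal projections
of `𝔄` summing to the identity. -/
theorem ergodic_finite_group_action_gives_minimal_projection_decomposition
    {G : Type*} [Group G] [Fintype G]
    (𝔄 : VonNeumannAlgebra H) (U : G →* unitary (H →L[ℂ] H))
    (hinv : ∀ T ∈ 𝔄, ∀ s : G,
      (U s : H →L[ℂ] H) * T * star (U s : H →L[ℂ] H) ∈ 𝔄)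
    (herg : ∀ T ∈ 𝔄,
      (∀ s : G, (U s : H →L[ℂ] H) * T * star (U s : H →L[ℂ] H) = T) →
      ∃ c : ℂ, T = c • (1 : H →L[ℂ] H)) :
    ∃ (n : ℕ) (p : Fin n → (H →L[ℂ] H)),
      (∀ i, IsMinimalProjectionIn 𝔄 (p i)) ∧
      (∀ i j, i ≠ j → p i * p j = 0) ∧
      (∑ i, p i) = 1 := by
  classical
  by_cases htriv : ∀ x : H, x = 0
  · -- trivial Hilbert space
    refine ⟨0, Fin.elim0, fun i => i.elim0, fun i => i.elim0, ?_⟩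
    rw [Finset.univ_eq_empty, Finset.sum_empty]
    ext x
    simp [htriv x]
  · push_neg at htriv
    obtain ⟨x₀, hx₀⟩ := htriv
    set u : H := ‖x₀‖⁻¹ • x₀ with hu_def
    have hu : ‖u‖ = 1 := by
      rw [hu_def, norm_smul, norm_inv, norm_norm,
        inv_mul_cancel₀ (norm_ne_zero_iff.mpr hx₀)]
    -- every nonzero projection in 𝔄 dominates a minimal projection
    have Hmin : ∀ k : ℕ, ∀ q : H →L[ℂ] H, IsProjectionCLM q → q ∈ 𝔄 → q ≠ 0 →
        phi U u q ≤ k → ∃ p, IsMinimalProjectionIn 𝔄 p ∧ q * p = p := by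
      intro k
      induction k with
      | zero =>
        intro q hq hqA hq0 hk
        have := phi_proj_ge_one 𝔄 U hinv herg u hu hq hqA hq0
        norm_num at hk
        linarith
      | succ k ih =>
        intro q hq hqA hq0 hk
        by_cases hminq : ∀ e : H →L[ℂ] H, IsProjectionCLM e → e ∈ 𝔄 →
            LinearMap.range (e : H →ₗ[ℂ] H) ≤ LinearMap.range (q : H →ₗ[ℂ] H) → e = 0 ∨ e = q
        · exact ⟨q, ⟨hq, hqA, hq0, hminq⟩, hq.2.eq⟩
        · push_neg at hminq
          obtain ⟨e, he, heA, her, he0, heq⟩ := hminq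
          have hqe : q * e = e := range_le_imp hq her
          have hsub : IsProjectionCLM (q - e) := proj_sub hq he hqe
          have hsubA : q - e ∈ 𝔄 := sub_mem hqA heA
          have hsub0 : q - e ≠ 0 := by
            intro h
            rw [sub_eq_zero] at h
            exact heq h.symm
          have h1 : 1 ≤ phi U u (q - e) :=
            phi_proj_ge_one 𝔄 U hinv herg u hu hsub hsubA hsub0
          have hsplit : phi U u q = phi U u e + phi U u (q - e) := by
            rw [← phi_add]
            congr 1
            abel
          have hφe : phi U u e ≤ k := by
            push_cast at hk ⊢
            linarith
          obtain ⟨p, hpmin, hep⟩ := ih e he heA he0 hφe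
          refine ⟨p, hpmin, ?_⟩
          calc q * p = q * (e * p) := by rw [hep]
          _ = (q * e) * p := by rw [mul_assoc]
          _ = e * p := by rw [hqe]
          _ = p := hep
    -- every projection in 𝔄 decomposes into pairwise orthogonal minimal projections
    have Hdec : ∀ k : ℕ, ∀ q : H →L[ℂ] H, IsProjectionCLM q → q ∈ 𝔄 →
        phi U u q ≤ k →
        ∃ (n : ℕ) (p : Fin n → (H →L[ℂ] H)),
          (∀ i, IsMinimalProjectionIn 𝔄 (p i)) ∧
          (∀ i j, i ≠ j → p i * p j = 0) ∧
          (∑ i, p i) = q := by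
      intro k
      induction k with
      | zero =>
        intro q hq hqA hk
        by_cases hq0 : q = 0
        · exact ⟨0, Fin.elim0, fun i => i.elim0, fun i => i.elim0, by
            rw [Finset.univ_eq_empty, Finset.sum_empty, hq0]⟩
        · have := phi_proj_ge_one 𝔄 U hinv herg u hu hq hqA hq0
          norm_num at hk
          linarith
      | succ k ih =>
        intro q hq hqA hk
        by_cases hq0 : q = 0
        · exact ⟨0, Fin.elim0, fun i => i.elim0, fun i => i.elim0, by
            rw [Finset.univ_eq_empty, Finset.sum_empty, hq0]⟩
        · obtain ⟨p, hpmin, hqp⟩ := Hmin (k + 1) q hq hqA hq0 hk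
          have hsub : IsProjectionCLM (q - p) := proj_sub hq hpmin.1 hqp
          have hsubA : q - p ∈ 𝔄 := sub_mem hqA hpmin.2.1
          have hp1 : 1 ≤ phi U u p :=
            phi_proj_ge_one 𝔄 U hinv herg u hu hpmin.1 hpmin.2.1 hpmin.2.2.1
          have hsplit : phi U u q = phi U u p + phi U u (q - p) := by
            rw [← phi_add]
            congr 1
            abel
          have hφ : phi U u (q - p) ≤ k := by
            push_cast at hk ⊢
            linarith
          obtain ⟨n, pf, hmin, horth, hsum⟩ := ih (q - p) hsub hsubA hφ
          -- orthogonality of p with the pf j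
          have hpq' : p * q = p := le_symm hq hpmin.1 hqp
          have hppf : ∀ j, p * pf j = 0 := by
            intro j
            have h1 : (∑ i, pf i) * pf j = pf j := by
              rw [Finset.sum_mul]
              rw [Finset.sum_eq_single j (fun i _ hij => horth i j hij) (by simp)]
              exact (hmin j).1.2.eq
            have h2 : (q - p) * pf j = pf j := by rw [hsum] at h1; exact h1
            have h3 : p * (q - p) = 0 := by
              rw [mul_sub, hpq', hpmin.1.2.eq, sub_self]
            calc p * pf j = p * ((q - p) * pf j) := by rw [h2]
            _ = (p * (q - p)) * pf j := by rw [mul_assoc]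
            _ = 0 := by rw [h3, zero_mul]
          have hpfp : ∀ j, pf j * p = 0 := by
            intro j
            have := congrArg star (hppf j)
            rwa [star_mul, hpmin.1.1.star_eq, (hmin j).1.1.star_eq, star_zero] at this
          refine ⟨n + 1, Fin.cons p pf, ?_, ?_, ?_⟩
          · intro i
            refine Fin.cases ?_ ?_ i
            · simpa using hpmin
            · intro j
              simpa using hmin j
          · intro i j
            induction i using Fin.cases with
            | zero =>
              induction j using Fin.cases with
              | zero => intro h; exact absurd rfl h
              | succ j2 => intro _; simpa using hppf j2
            | succ i' =>
              induction j using Fin.cases with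
              | zero => intro _; simpa using hpfp i'
              | succ j' =>
                intro hne
                have hne' : i' ≠ j' := by
                  intro h
                  apply hne
                  rw [h]
                simpa using horth i' j' hne'
          · rw [Fin.sum_cons, hsum]
            abel
    have hφ1 : phi U u (1 : H →L[ℂ] H) ≤ (Fintype.card G : ℕ) := by
      rw [phi_one U u hu]
    exact Hdec (Fintype.card G) 1 proj_one (one_mem 𝔄) hφ1

end Main
end

section
/- Let (π, U) be an irreducible covariant representation of the dynamical system (A, G, σ) on a complex Hilbert space H, where G is a finite group, irreducibility meaning that every bounded operator T on H satisfying T π(a) = π(a) T for all a ∈ A and T U(s) = U(s) T for all s ∈ G is a scalar multiple of the identity. Then H decomposes as a finite orthogonal direct sum of closed subspaces K_1, …, K_n (i.e. the K_i are pairwise orthogonal and their supremum is all of H) such that each K_i is invariant under π(a) for every a ∈ A, each K_i is nonzero, and the restriction of π to each K_i is irreducible: every closed subspace of K_i invariant under all π(a) equals {0} or K_i. -/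
variable {H : Type*} [NormedAddCommGroup H] [InnerProductSpace ℂ H] [CompleteSpace H]
variable {A : Type*} [NormedRing A] [StarRing A] [CStarRing A] [NormedAlgebra ℂ A]
  [CompleteSpace A] [StarModule ℂ A]

open scoped InnerProductSpace
open Submodule
set_option linter.unusedSectionVars false
set_option maxHeartbeats 1000000

noncomputable section
namespace CovDecompAux

/-- The orthogonal projection onto `K` as an endomorphism of `H`. -/
def proj (K : Submodule ℂ H) [HasOrthogonalProjection K] : H →L[ℂ] H :=
  K.subtypeL.comp (orthogonalProjection K)

section projBasic
variable (K : Submodule ℂ H) [HasOrthogonalProjection K]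

lemma proj_apply (x : H) : proj K x = (orthogonalProjection K x : H) := rfl

lemma proj_mem (x : H) : proj K x ∈ K := (orthogonalProjection K x).2

lemma proj_eq_self {x : H} (hx : x ∈ K) : proj K x = x :=
  starProjection_eq_self_iff.mpr hx

lemma sub_proj_mem (x : H) : x - proj K x ∈ Kᗮ :=
  sub_starProjection_mem_orthogonal x

lemma inner_proj (ξ : H) : ⟪ξ, proj K ξ⟫_ℂ = ((‖proj K ξ‖ : ℝ) : ℂ) ^ 2 := by
  have h : ⟪ξ - proj K ξ, proj K ξ⟫_ℂ = 0 :=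
    Submodule.inner_left_of_mem_orthogonal (proj_mem K ξ) (sub_proj_mem K ξ)
  have h2 : ⟪ξ, proj K ξ⟫_ℂ = ⟪proj K ξ, proj K ξ⟫_ℂ + ⟪ξ - proj K ξ, proj K ξ⟫_ℂ := by
    rw [← inner_add_left, add_sub_cancel]
  rw [h2, h, add_zero, inner_self_eq_norm_sq_to_K]
  norm_cast

lemma norm_proj_le (ξ : H) : ‖proj K ξ‖ ≤ ‖ξ‖ := by
  have h1 : ‖orthogonalProjection K ξ‖ ≤ 1 * ‖ξ‖ :=
    (orthogonalProjection K).le_opNorm ξ |>.trans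
      (by gcongr; exact orthogonalProjectionOnto_norm_le K)
  exact (by simpa using h1 : ‖K.starProjection ξ‖ ≤ ‖ξ‖)

end projBasic

variable {G : Type*} [Group G] [Fintype G]

lemma star_coe (U : G →* unitary (H →L[ℂ] H)) (g : G) :
    star ((U g : H →L[ℂ] H)) = ((U g⁻¹ : unitary (H →L[ℂ] H)) : H →L[ℂ] H) := by
  rw [← Unitary.coe_star, Unitary.star_eq_inv, ← map_inv]

lemma coe_mul_star (U : G →* unitary (H →L[ℂ] H)) (g : G) :
    (U g : H →L[ℂ] H) * star ((U g : H →L[ℂ] H)) = 1 :=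
  Unitary.coe_mul_star_self (U g)

lemma star_mul_coe (U : G →* unitary (H →L[ℂ] H)) (g : G) :
    star ((U g : H →L[ℂ] H)) * (U g : H →L[ℂ] H) = 1 :=
  Unitary.coe_star_mul_self (U g)

lemma pi_inner (π : A →⋆ₐ[ℂ] (H →L[ℂ] H)) (a : A) (x y : H) :
    ⟪π a x, y⟫_ℂ = ⟪x, π (star a) y⟫_ℂ := by
  have h : π a = ContinuousLinearMap.adjoint (π (star a)) := by
    rw [← ContinuousLinearMap.star_eq_adjoint, ← map_star, star_star]
  rw [h]
  exact ContinuousLinearMap.adjoint_inner_left (π (star a)) y x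

lemma U_inner (U : G →* unitary (H →L[ℂ] H)) (g : G) (x y : H) :
    ⟪x, (U g : H →L[ℂ] H) y⟫_ℂ = ⟪star ((U g : H →L[ℂ] H)) x, y⟫_ℂ := by
  rw [ContinuousLinearMap.star_eq_adjoint]
  exact (ContinuousLinearMap.adjoint_inner_left _ y x).symm

lemma norm_star_U (U : G →* unitary (H →L[ℂ] H)) (g : G) (x : H) :
    ‖star ((U g : H →L[ℂ] H)) x‖ = ‖x‖ := by
  have h : ⟪star ((U g : H →L[ℂ] H)) x, star ((U g : H →L[ℂ] H)) x⟫_ℂ = ⟪x, x⟫_ℂ := by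
    rw [← U_inner, ← ContinuousLinearMap.mul_apply, coe_mul_star,
      ContinuousLinearMap.one_apply]
  rw [inner_self_eq_norm_sq_to_K, inner_self_eq_norm_sq_to_K] at h
  have h3 : (‖star ((U g : H →L[ℂ] H)) x‖ : ℝ) ^ 2 = (‖x‖ : ℝ) ^ 2 := by exact_mod_cast h
  nlinarith [norm_nonneg (star ((U g : H →L[ℂ] H)) x), norm_nonneg x]

/-- invariance of the orthogonal complement -/
lemma orth_invariant (π : A →⋆ₐ[ℂ] (H →L[ℂ] H)) {K : Submodule ℂ H}
    (hInv : ∀ a : A, ∀ x ∈ K, π a x ∈ K) (a : A) {y : H} (hy : y ∈ Kᗮ) :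
    π a y ∈ Kᗮ := by
  rw [Submodule.mem_orthogonal]
  intro u hu
  have h := pi_inner π (star a) u y
  rw [star_star] at h
  rw [← h]
  exact Submodule.inner_right_of_mem_orthogonal (hInv (star a) u hu) hy

lemma proj_comm (π : A →⋆ₐ[ℂ] (H →L[ℂ] H)) {K : Submodule ℂ H} [HasOrthogonalProjection K]
    (hInv : ∀ a : A, ∀ x ∈ K, π a x ∈ K) (a : A) :
    proj K * π a = π a * proj K := by
  ext x
  show proj K (π a x) = π a (proj K x)
  refine eq_starProjection_of_mem_orthogonal (hInv a _ (proj_mem K x)) ?_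
  have h : π a x - π a (proj K x) = π a (x - proj K x) := by
    rw [map_sub]
  rw [h]
  exact orth_invariant π hInv a (sub_proj_mem K x)

/-- Average of `T` over the unitary conjugation action of `G`. -/
def avg (U : G →* unitary (H →L[ℂ] H)) (T : H →L[ℂ] H) : H →L[ℂ] H :=
  (Fintype.card G : ℂ)⁻¹ • ∑ g : G, (U g : H →L[ℂ] H) * T * star ((U g : H →L[ℂ] H))

lemma conj_comm_pi (σ : G →* (A ≃ₐ[ℂ] A)) (π : A →⋆ₐ[ℂ] (H →L[ℂ] H))
    (U : G →* unitary (H →L[ℂ] H))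
    (hcov : ∀ (g : G) (a : A),
      (U g : H →L[ℂ] H) * π a * star (U g : H →L[ℂ] H) = π (σ g a))
    {T : H →L[ℂ] H} (hT : ∀ a : A, T * π a = π a * T) (g : G) (a : A) :
    ((U g : H →L[ℂ] H) * T * star ((U g : H →L[ℂ] H))) * π a
      = π a * ((U g : H →L[ℂ] H) * T * star ((U g : H →L[ℂ] H))) := by
  have h := hcov g⁻¹ a
  rw [← star_coe U g, star_star] at h
  have h1 : (U g : H →L[ℂ] H) * π (σ g⁻¹ a) = π a * (U g : H →L[ℂ] H) := by
    rw [← h, ← mul_assoc, ← mul_assoc, coe_mul_star U g, one_mul]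
  have h2 : star ((U g : H →L[ℂ] H)) * π a
      = π (σ g⁻¹ a) * star ((U g : H →L[ℂ] H)) := by
    have h3 := congrArg (· * star ((U g : H →L[ℂ] H))) h
    simp only [mul_assoc, coe_mul_star U g, mul_one] at h3
    simpa [mul_assoc] using h3
  calc ((U g : H →L[ℂ] H) * T * star ((U g : H →L[ℂ] H))) * π a
      = (U g : H →L[ℂ] H) * T * (star ((U g : H →L[ℂ] H)) * π a) := by
        simp only [mul_assoc]
    _ = (U g : H →L[ℂ] H) * T * (π (σ g⁻¹ a) * star ((U g : H →L[ℂ] H))) := by rw [h2]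
    _ = (U g : H →L[ℂ] H) * (T * π (σ g⁻¹ a)) * star ((U g : H →L[ℂ] H)) := by
        simp only [mul_assoc]
    _ = (U g : H →L[ℂ] H) * (π (σ g⁻¹ a) * T) * star ((U g : H →L[ℂ] H)) := by rw [hT]
    _ = ((U g : H →L[ℂ] H) * π (σ g⁻¹ a)) * (T * star ((U g : H →L[ℂ] H))) := by
        simp only [mul_assoc]
    _ = (π a * (U g : H →L[ℂ] H)) * (T * star ((U g : H →L[ℂ] H))) := by rw [h1]
    _ = π a * ((U g : H →L[ℂ] H) * T * star ((U g : H →L[ℂ] H))) := by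
        simp only [mul_assoc]

lemma avg_comm_pi (σ : G →* (A ≃ₐ[ℂ] A)) (π : A →⋆ₐ[ℂ] (H →L[ℂ] H))
    (U : G →* unitary (H →L[ℂ] H))
    (hcov : ∀ (g : G) (a : A),
      (U g : H →L[ℂ] H) * π a * star (U g : H →L[ℂ] H) = π (σ g a))
    {T : H →L[ℂ] H} (hT : ∀ a : A, T * π a = π a * T) (a : A) :
    avg U T * π a = π a * avg U T := by
  unfold avg
  rw [smul_mul_assoc, mul_smul_comm, Finset.sum_mul, Finset.mul_sum]
  congr 1
  exact Finset.sum_congr rfl fun g _ => conj_comm_pi σ π U hcov hT g a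

lemma avg_conj_U (U : G →* unitary (H →L[ℂ] H)) (T : H →L[ℂ] H) (h : G) :
    (U h : H →L[ℂ] H) * avg U T * star ((U h : H →L[ℂ] H)) = avg U T := by
  unfold avg
  rw [mul_smul_comm, smul_mul_assoc]
  congr 1
  rw [Finset.mul_sum, Finset.sum_mul]
  have key : ∀ g : G, (U h : H →L[ℂ] H) * ((U g : H →L[ℂ] H) * T * star ((U g : H →L[ℂ] H)))
      * star ((U h : H →L[ℂ] H))
      = (U (h * g) : H →L[ℂ] H) * T * star ((U (h * g) : H →L[ℂ] H)) := by
    intro g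
    have hm : ((U (h * g) : H →L[ℂ] H)) = (U h : H →L[ℂ] H) * (U g : H →L[ℂ] H) := by
      rw [map_mul]; rfl
    rw [hm, star_mul]
    simp only [mul_assoc]
  calc ∑ g : G, (U h : H →L[ℂ] H) * ((U g : H →L[ℂ] H) * T * star ((U g : H →L[ℂ] H)))
        * star ((U h : H →L[ℂ] H))
      = ∑ g : G, (U (h * g) : H →L[ℂ] H) * T * star ((U (h * g) : H →L[ℂ] H)) :=
        Finset.sum_congr rfl fun g _ => key g
    _ = ∑ g : G, (U g : H →L[ℂ] H) * T * star ((U g : H →L[ℂ] H)) :=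
        Fintype.sum_equiv (Equiv.mulLeft h) _ _ fun g => rfl

lemma avg_comm_U (U : G →* unitary (H →L[ℂ] H)) (T : H →L[ℂ] H) (h : G) :
    avg U T * (U h : H →L[ℂ] H) = (U h : H →L[ℂ] H) * avg U T := by
  conv_lhs => rw [← avg_conj_U U T h]
  rw [mul_assoc, star_mul_coe U h, mul_one]

lemma avg_add (U : G →* unitary (H →L[ℂ] H)) (T T' : H →L[ℂ] H) :
    avg U (T + T') = avg U T + avg U T' := by
  unfold avg
  rw [← smul_add, ← Finset.sum_add_distrib]
  congr 1
  exact Finset.sum_congr rfl fun g _ => by simp [mul_add, add_mul]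

lemma inner_avg (U : G →* unitary (H →L[ℂ] H)) (T : H →L[ℂ] H) (ξ : H) :
    ⟪ξ, avg U T ξ⟫_ℂ = (Fintype.card G : ℂ)⁻¹
      * ∑ g : G, ⟪star ((U g : H →L[ℂ] H)) ξ, T (star ((U g : H →L[ℂ] H)) ξ)⟫_ℂ := by
  unfold avg
  rw [ContinuousLinearMap.smul_apply, ContinuousLinearMap.sum_apply, inner_smul_right,
    inner_sum]
  congr 1
  refine Finset.sum_congr rfl fun g _ => ?_
  have h : ((U g : H →L[ℂ] H) * T * star ((U g : H →L[ℂ] H))) ξ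
      = (U g : H →L[ℂ] H) (T (star ((U g : H →L[ℂ] H)) ξ)) := rfl
  rw [h, U_inner]

lemma inner_avg_proj (U : G →* unitary (H →L[ℂ] H)) (K : Submodule ℂ H)
    [HasOrthogonalProjection K] (ξ : H) :
    ⟪ξ, avg U (proj K) ξ⟫_ℂ
      = (((Fintype.card G : ℝ)⁻¹
          * ∑ g : G, ‖proj K (star ((U g : H →L[ℂ] H)) ξ)‖ ^ 2 : ℝ) : ℂ) := by
  rw [inner_avg]
  push_cast
  congr 1
  exact Finset.sum_congr rfl fun g _ => by rw [inner_proj]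

/-- the key scalar lemma -/
lemma exists_scalar [Nontrivial H] (σ : G →* (A ≃ₐ[ℂ] A)) (π : A →⋆ₐ[ℂ] (H →L[ℂ] H))
    (U : G →* unitary (H →L[ℂ] H))
    (hcov : ∀ (g : G) (a : A),
      (U g : H →L[ℂ] H) * π a * star (U g : H →L[ℂ] H) = π (σ g a))
    (hirr : ∀ T : H →L[ℂ] H,
      (∀ a : A, T * π a = π a * T) →
      (∀ g : G, T * (U g : H →L[ℂ] H) = (U g : H →L[ℂ] H) * T) →
      ∃ c : ℂ, T = c • (1 : H →L[ℂ] H))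
    (K : Submodule ℂ H) [HasOrthogonalProjection K]
    (hInv : ∀ a : A, ∀ x ∈ K, π a x ∈ K) :
    ∃ r : ℝ, avg U (proj K) = ((r : ℂ)) • (1 : H →L[ℂ] H) ∧ 0 ≤ r ∧ r ≤ 1 ∧
      (K ≠ ⊥ → ((Fintype.card G : ℝ))⁻¹ ≤ r) := by
  obtain ⟨c, hc⟩ := hirr (avg U (proj K))
    (avg_comm_pi σ π U hcov (proj_comm π hInv)) (avg_comm_U U (proj K))
  have hcard : (0 : ℝ) < (Fintype.card G : ℝ) := by
    exact_mod_cast Fintype.card_pos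
  -- evaluation of the scalar at any unit vector
  have heval : ∀ ξ : H, ‖ξ‖ = 1 →
      c = (((Fintype.card G : ℝ)⁻¹
        * ∑ g : G, ‖proj K (star ((U g : H →L[ℂ] H)) ξ)‖ ^ 2 : ℝ) : ℂ) := by
    intro ξ hξ
    have h1 : ⟪ξ, avg U (proj K) ξ⟫_ℂ = c := by
      rw [hc, ContinuousLinearMap.smul_apply, ContinuousLinearMap.one_apply,
        inner_smul_right, inner_self_eq_norm_sq_to_K, hξ]
      norm_num
    rw [← h1, inner_avg_proj]
  obtain ⟨x₀, hx₀⟩ := exists_ne (0 : H)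
  set ξ₀ : H := ‖x₀‖⁻¹ • x₀ with hξ₀def
  have hξ₀ : ‖ξ₀‖ = 1 := by
    rw [hξ₀def, norm_smul, norm_inv, norm_norm, inv_mul_cancel₀ (norm_ne_zero_iff.mpr hx₀)]
  set r : ℝ := (Fintype.card G : ℝ)⁻¹
    * ∑ g : G, ‖proj K (star ((U g : H →L[ℂ] H)) ξ₀)‖ ^ 2 with hrdef
  have hcr : c = (r : ℂ) := heval ξ₀ hξ₀
  refine ⟨r, by rw [hc, hcr], ?_, ?_, ?_⟩
  · apply mul_nonneg (by positivity)
    exact Finset.sum_nonneg fun g _ => sq_nonneg _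
  · -- r ≤ 1
    have hterm : ∀ g : G, ‖proj K (star ((U g : H →L[ℂ] H)) ξ₀)‖ ^ 2 ≤ 1 := by
      intro g
      have h1 : ‖proj K (star ((U g : H →L[ℂ] H)) ξ₀)‖ ≤ 1 := by
        calc ‖proj K (star ((U g : H →L[ℂ] H)) ξ₀)‖
            ≤ ‖star ((U g : H →L[ℂ] H)) ξ₀‖ := norm_proj_le K _
          _ = ‖ξ₀‖ := norm_star_U U g ξ₀
          _ = 1 := hξ₀
      exact pow_le_one₀ (norm_nonneg _) h1
    calc r ≤ (Fintype.card G : ℝ)⁻¹ * ∑ _g : G, (1 : ℝ) := by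
          rw [hrdef]
          exact mul_le_mul_of_nonneg_left
            (Finset.sum_le_sum fun g _ => hterm g) (by positivity)
      _ = 1 := by
          rw [Finset.sum_const, Finset.card_univ, nsmul_eq_mul, mul_one,
            inv_mul_cancel₀ (ne_of_gt hcard)]
  · -- lower bound when K ≠ ⊥
    intro hK
    obtain ⟨x, hxK, hx0⟩ := K.ne_bot_iff.mp hK
    set ξ : H := ‖x‖⁻¹ • x with hξdef
    have hξK : ξ ∈ K := K.smul_mem _ hxK
    have hξ : ‖ξ‖ = 1 := by
      rw [hξdef, norm_smul, norm_inv, norm_norm, inv_mul_cancel₀ (norm_ne_zero_iff.mpr hx0)]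
    have h2 := heval ξ hξ
    rw [hcr] at h2
    have h3 : r = (Fintype.card G : ℝ)⁻¹
        * ∑ g : G, ‖proj K (star ((U g : H →L[ℂ] H)) ξ)‖ ^ 2 := by exact_mod_cast h2
    have hone : ‖proj K (star ((U (1 : G) : H →L[ℂ] H)) ξ)‖ ^ 2 = 1 := by
      have hU1 : ((U (1 : G) : H →L[ℂ] H)) = 1 := by rw [map_one]; rfl
      rw [hU1, star_one, ContinuousLinearMap.one_apply, proj_eq_self K hξK, hξ, one_pow]
    have h4 : (1 : ℝ) ≤ ∑ g : G, ‖proj K (star ((U g : H →L[ℂ] H)) ξ)‖ ^ 2 := by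
      rw [← hone]
      exact Finset.single_le_sum
        (f := fun g : G => ‖proj K (star ((U g : H →L[ℂ] H)) ξ)‖ ^ 2)
        (fun g _ => sq_nonneg _) (Finset.mem_univ (1 : G))
    rw [h3]
    calc (Fintype.card G : ℝ)⁻¹ = (Fintype.card G : ℝ)⁻¹ * 1 := by ring
      _ ≤ _ := mul_le_mul_of_nonneg_left h4 (by positivity)

/-- decomposition of a projection along a closed invariant subspace -/
lemma proj_sum {L K : Submodule ℂ H} [HasOrthogonalProjection K] [HasOrthogonalProjection L]
    [HasOrthogonalProjection (K ⊓ Lᗮ)] (hLK : L ≤ K) :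
    proj K = proj L + proj (K ⊓ Lᗮ) := by
  ext x
  have hmem' : proj (K ⊓ Lᗮ) x ∈ K ⊓ Lᗮ := proj_mem _ x
  have hvm : proj L x + proj (K ⊓ Lᗮ) x ∈ K :=
    K.add_mem (hLK (proj_mem L x)) (Submodule.mem_inf.mp hmem').1
  show proj K x = proj L x + proj (K ⊓ Lᗮ) x
  refine eq_starProjection_of_mem_of_inner_eq_zero hvm ?_
  intro w hw
  have hrw : x - (proj L x + proj (K ⊓ Lᗮ) x) = x - proj L x - proj (K ⊓ Lᗮ) x := by
    abel
  rw [hrw]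
  have hw2 : w - proj L w ∈ K ⊓ Lᗮ :=
    Submodule.mem_inf.mpr ⟨K.sub_mem hw (hLK (proj_mem L w)), sub_proj_mem L w⟩
  have hwrw : w = proj L w + (w - proj L w) := by abel
  rw [hwrw, inner_add_right]
  have z1 : ⟪x - proj L x - proj (K ⊓ Lᗮ) x, proj L w⟫_ℂ = 0 := by
    rw [inner_sub_left]
    have t1 : ⟪x - proj L x, proj L w⟫_ℂ = 0 :=
      Submodule.inner_left_of_mem_orthogonal (proj_mem L w) (sub_proj_mem L x)
    have t2 : ⟪proj (K ⊓ Lᗮ) x, proj L w⟫_ℂ = 0 :=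
      Submodule.inner_left_of_mem_orthogonal (proj_mem L w)
        (Submodule.mem_inf.mp hmem').2
    rw [t1, t2, sub_zero]
  have z2 : ⟪x - proj L x - proj (K ⊓ Lᗮ) x, w - proj L w⟫_ℂ = 0 := by
    have hrw2 : x - proj L x - proj (K ⊓ Lᗮ) x
        = (x - proj (K ⊓ Lᗮ) x) - proj L x := by abel
    rw [hrw2, inner_sub_left]
    have t1 : ⟪x - proj (K ⊓ Lᗮ) x, w - proj L w⟫_ℂ = 0 :=
      Submodule.inner_left_of_mem_orthogonal hw2 (sub_proj_mem (K ⊓ Lᗮ) x)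
    have t2 : ⟪proj L x, w - proj L w⟫_ℂ = 0 :=
      Submodule.inner_right_of_mem_orthogonal (proj_mem L x)
        (Submodule.mem_inf.mp hw2).2
    rw [t1, t2, sub_zero]
  rw [z1, z2, add_zero]

lemma mem_sup_of_mem {L K : Submodule ℂ H} [HasOrthogonalProjection L] (hLK : L ≤ K)
    {x : H} (hx : x ∈ K) : x ∈ L ⊔ (K ⊓ Lᗮ) := by
  refine Submodule.mem_sup.mpr ⟨proj L x, proj_mem L x, x - proj L x, ?_, by abel⟩
  exact Submodule.mem_inf.mpr ⟨K.sub_mem hx (hLK (proj_mem L x)), sub_proj_mem L x⟩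

end CovDecompAux
end


open CovDecompAux

/-- Let `(π, U)` be an irreducible covariant representation of the dynamical system
`(A, G, σ)` with `G` a finite group.  Then `H` is a finite orthogonal direct sum of nonzero
closed `π`-invariant subspaces on each of which `π` restricts to an irreducible
representation. -/
theorem irreducible_covariant_rep_finite_decomposition
    {G : Type*} [Group G] [Fintype G]
    (σ : G →* (A ≃ₐ[ℂ] A)) (hσstar : ∀ (g : G) (a : A), σ g (star a) = star (σ g a))
    (π : A →⋆ₐ[ℂ] (H →L[ℂ] H)) (U : G →* unitary (H →L[ℂ] H))
    (hcov : ∀ (g : G) (a : A),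
      (U g : H →L[ℂ] H) * π a * star (U g : H →L[ℂ] H) = π (σ g a))
    (hirr : ∀ T : H →L[ℂ] H,
      (∀ a : A, T * π a = π a * T) →
      (∀ g : G, T * (U g : H →L[ℂ] H) = (U g : H →L[ℂ] H) * T) →
      ∃ c : ℂ, T = c • (1 : H →L[ℂ] H)) :
    ∃ (n : ℕ) (K : Fin n → Submodule ℂ H),
      (∀ i, IsClosed (K i : Set H)) ∧
      (∀ i, K i ≠ ⊥) ∧
      (Pairwise fun i j => K i ≤ (K j)ᗮ) ∧
      (⨆ i, K i) = ⊤ ∧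
      (∀ i, ∀ a : A, ∀ x ∈ K i, π a x ∈ K i) ∧
      (∀ i, ∀ L : Submodule ℂ H, IsClosed (L : Set H) → L ≤ K i →
        (∀ a : A, ∀ x ∈ L, π a x ∈ L) → L = ⊥ ∨ L = K i) := by
  classical
  by_cases hH : Subsingleton H
  · refine ⟨0, Fin.elim0, fun i => i.elim0, fun i => i.elim0, fun i => i.elim0, ?_,
      fun i => i.elim0, fun i => i.elim0⟩
    have h1 : (⨆ i : Fin 0, Fin.elim0 i : Submodule ℂ H) = ⊥ := by simp
    have h2 : (⊥ : Submodule ℂ H) = ⊤ := by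
      ext x; simp [Subsingleton.elim x 0]
    rw [h1, h2]
  · haveI : Nontrivial H := not_subsingleton_iff_nontrivial.mp hH
    have hNpos : (0 : ℝ) < (Fintype.card G : ℝ) := by exact_mod_cast Fintype.card_pos
    -- uniqueness of real scalars
    have scalar_unique : ∀ r s : ℝ,
        ((r : ℂ)) • (1 : H →L[ℂ] H) = ((s : ℂ)) • (1 : H →L[ℂ] H) → r = s := by
      intro r s hrs
      obtain ⟨x₀, hx₀⟩ := exists_ne (0 : H)
      have h := congrArg (fun T : H →L[ℂ] H => T x₀) hrs
      simp only [ContinuousLinearMap.smul_apply, ContinuousLinearMap.one_apply] at h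
      have := smul_left_injective ℂ hx₀ h
      exact_mod_cast this
    -- extraction of a minimal nonzero invariant subspace
    have minimal : ∀ (n : ℕ) (K : Submodule ℂ H) [HasOrthogonalProjection K],
        IsClosed (K : Set H) → (∀ a : A, ∀ x ∈ K, π a x ∈ K) → K ≠ ⊥ →
        ∀ r : ℝ, avg U (proj K) = ((r : ℂ)) • (1 : H →L[ℂ] H) →
        r * (Fintype.card G : ℝ) < n →
        ∃ M : Submodule ℂ H, IsClosed (M : Set H) ∧ (∀ a : A, ∀ x ∈ M, π a x ∈ M) ∧
          M ≠ ⊥ ∧ M ≤ K ∧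
          (∀ L : Submodule ℂ H, IsClosed (L : Set H) → L ≤ M →
            (∀ a : A, ∀ x ∈ L, π a x ∈ L) → L = ⊥ ∨ L = M) := by
      intro n
      induction n with
      | zero =>
        intro K instK hc hInv hne r hr hlt
        exfalso
        obtain ⟨r', hr'1, hr'2, _, hr'4⟩ := exists_scalar σ π U hcov hirr K hInv
        have hrr : r = r' := scalar_unique r r' (hr.symm.trans hr'1)
        have h5 := hr'4 hne
        have h0 : 0 < r' := lt_of_lt_of_le (inv_pos.mpr hNpos) h5
        push_cast at hlt
        nlinarith [mul_pos h0 hNpos]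
      | succ n ih =>
        intro K instK hc hInv hne r hr hlt
        by_cases hmin : ∀ L : Submodule ℂ H, IsClosed (L : Set H) → L ≤ K →
            (∀ a : A, ∀ x ∈ L, π a x ∈ L) → L = ⊥ ∨ L = K
        · exact ⟨K, hc, hInv, hne, le_refl K, hmin⟩
        · push_neg at hmin
          obtain ⟨L, hLc, hLK, hLinv, hL0, hLne⟩ := hmin
          haveI : CompleteSpace L := hLc.completeSpace_coe
          have hL'c : IsClosed ((K ⊓ Lᗮ : Submodule ℂ H) : Set H) := by
            rw [Submodule.coe_inf]
            exact hc.inter L.isClosed_orthogonal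
          haveI : CompleteSpace (K ⊓ Lᗮ : Submodule ℂ H) := hL'c.completeSpace_coe
          have hL'inv : ∀ a : A, ∀ x ∈ (K ⊓ Lᗮ : Submodule ℂ H), π a x ∈ K ⊓ Lᗮ := by
            intro a x hx
            rw [Submodule.mem_inf] at hx ⊢
            exact ⟨hInv a x hx.1, orth_invariant π hLinv a hx.2⟩
          have hL'0 : (K ⊓ Lᗮ : Submodule ℂ H) ≠ ⊥ := by
            intro h0
            apply hLne
            refine le_antisymm hLK fun x hx => ?_
            have hsup := mem_sup_of_mem hLK hx
            rw [h0, sup_bot_eq] at hsup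
            exact hsup
          obtain ⟨s, hs1, hs2, hs3, hs4⟩ := exists_scalar σ π U hcov hirr L hLinv
          obtain ⟨t, ht1, ht2, ht3, ht4⟩ := exists_scalar σ π U hcov hirr (K ⊓ Lᗮ) hL'inv
          have hsum : r = s + t := by
            have hps : proj K = proj L + proj (K ⊓ Lᗮ) := proj_sum hLK
            have havg : avg U (proj K) = avg U (proj L) + avg U (proj (K ⊓ Lᗮ)) := by
              rw [hps, avg_add]
            rw [hr, hs1, ht1] at havg
            have : ((r : ℂ)) • (1 : H →L[ℂ] H) = (((s + t : ℝ) : ℂ)) • 1 := by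
              rw [havg]; push_cast; rw [add_smul]
            exact scalar_unique r (s + t) this
          have hs_lb : (Fintype.card G : ℝ)⁻¹ ≤ s := hs4 hL0
          have hinv1 : (Fintype.card G : ℝ)⁻¹ * (Fintype.card G : ℝ) = 1 :=
            inv_mul_cancel₀ (ne_of_gt hNpos)
          have hlt' : t * (Fintype.card G : ℝ) < n := by
            push_cast at hlt ⊢
            nlinarith
          obtain ⟨M, hM⟩ := ih (K ⊓ Lᗮ) hL'c hL'inv hL'0 t ht1 hlt'
          exact ⟨M, hM.1, hM.2.1, hM.2.2.1, hM.2.2.2.1.trans inf_le_left,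
            hM.2.2.2.2⟩
    -- full decomposition
    have decomp : ∀ (n : ℕ) (K : Submodule ℂ H) [HasOrthogonalProjection K],
        IsClosed (K : Set H) → (∀ a : A, ∀ x ∈ K, π a x ∈ K) →
        ∀ r : ℝ, avg U (proj K) = ((r : ℂ)) • (1 : H →L[ℂ] H) →
        r * (Fintype.card G : ℝ) < n →
        ∃ (m : ℕ) (f : Fin m → Submodule ℂ H),
          (∀ i, IsClosed (f i : Set H)) ∧ (∀ i, f i ≠ ⊥) ∧ (∀ i, f i ≤ K) ∧
          (Pairwise fun i j => f i ≤ (f j)ᗮ) ∧ (⨆ i, f i) = K ∧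
          (∀ i, ∀ a : A, ∀ x ∈ f i, π a x ∈ f i) ∧
          (∀ i, ∀ L : Submodule ℂ H, IsClosed (L : Set H) → L ≤ f i →
            (∀ a : A, ∀ x ∈ L, π a x ∈ L) → L = ⊥ ∨ L = f i) := by
      intro n
      induction n with
      | zero =>
        intro K instK hc hInv r hr hlt
        exfalso
        obtain ⟨r', hr'1, hr'2, _, _⟩ := exists_scalar σ π U hcov hirr K hInv
        have hrr : r = r' := scalar_unique r r' (hr.symm.trans hr'1)
        push_cast at hlt
        nlinarith [mul_nonneg hr'2 hNpos.le]
      | succ n ih =>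
        intro K instK hc hInv r hr hlt
        by_cases hK0 : K = ⊥
        · refine ⟨0, Fin.elim0, fun i => i.elim0, fun i => i.elim0, fun i => i.elim0,
            fun i => i.elim0, ?_, fun i => i.elim0, fun i => i.elim0⟩
          rw [hK0]
          simp
        · obtain ⟨M, hMc, hMinv, hM0, hMK, hMmin⟩ :=
            minimal (n + 1) K hc hInv hK0 r hr hlt
          haveI : CompleteSpace M := hMc.completeSpace_coe
          have hK'c : IsClosed ((K ⊓ Mᗮ : Submodule ℂ H) : Set H) := by
            rw [Submodule.coe_inf]
            exact hc.inter M.isClosed_orthogonal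
          haveI : CompleteSpace (K ⊓ Mᗮ : Submodule ℂ H) := hK'c.completeSpace_coe
          have hK'inv : ∀ a : A, ∀ x ∈ (K ⊓ Mᗮ : Submodule ℂ H), π a x ∈ K ⊓ Mᗮ := by
            intro a x hx
            rw [Submodule.mem_inf] at hx ⊢
            exact ⟨hInv a x hx.1, orth_invariant π hMinv a hx.2⟩
          obtain ⟨s, hs1, hs2, hs3, hs4⟩ := exists_scalar σ π U hcov hirr M hMinv
          obtain ⟨t, ht1, ht2, ht3, ht4⟩ := exists_scalar σ π U hcov hirr (K ⊓ Mᗮ) hK'inv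
          have hsum : r = s + t := by
            have hps : proj K = proj M + proj (K ⊓ Mᗮ) := proj_sum hMK
            have havg : avg U (proj K) = avg U (proj M) + avg U (proj (K ⊓ Mᗮ)) := by
              rw [hps, avg_add]
            rw [hr, hs1, ht1] at havg
            have : ((r : ℂ)) • (1 : H →L[ℂ] H) = (((s + t : ℝ) : ℂ)) • 1 := by
              rw [havg]; push_cast; rw [add_smul]
            exact scalar_unique r (s + t) this
          have hs_lb : (Fintype.card G : ℝ)⁻¹ ≤ s := hs4 hM0
          have hinv1 : (Fintype.card G : ℝ)⁻¹ * (Fintype.card G : ℝ) = 1 :=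
            inv_mul_cancel₀ (ne_of_gt hNpos)
          have hlt' : t * (Fintype.card G : ℝ) < n := by
            push_cast at hlt ⊢
            nlinarith
          obtain ⟨m, f, hfc, hf0, hfK, hfpair, hfsup, hfinv, hfmin⟩ :=
            ih (K ⊓ Mᗮ) hK'c hK'inv t ht1 hlt'
          have hfM : ∀ i, f i ≤ Mᗮ := fun i => (hfK i).trans inf_le_right
          set g : Fin (m + 1) → Submodule ℂ H := Fin.cons M f with hg
          have hg0 : g 0 = M := by
            rw [hg]; exact Fin.cons_zero (α := fun _ : Fin (m + 1) => Submodule ℂ H) M f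
          have hgs : ∀ i' : Fin m, g i'.succ = f i' := fun i' => by
            rw [hg]; exact Fin.cons_succ (α := fun _ : Fin (m + 1) => Submodule ℂ H) M f i'
          refine ⟨m + 1, g, ?_, ?_, ?_, ?_, ?_, ?_, ?_⟩
          · intro i
            obtain rfl | ⟨i', rfl⟩ := i.eq_zero_or_eq_succ
            · rw [hg0]; exact hMc
            · rw [hgs i']; exact hfc i'
          · intro i
            obtain rfl | ⟨i', rfl⟩ := i.eq_zero_or_eq_succ
            · rw [hg0]; exact hM0
            · rw [hgs i']; exact hf0 i'
          · intro i
            obtain rfl | ⟨i', rfl⟩ := i.eq_zero_or_eq_succ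
            · rw [hg0]; exact hMK
            · rw [hgs i']; exact (hfK i').trans inf_le_left
          · intro i j hij
            obtain rfl | ⟨i', rfl⟩ := i.eq_zero_or_eq_succ <;>
              obtain rfl | ⟨j', rfl⟩ := j.eq_zero_or_eq_succ
            · exact absurd rfl hij
            · rw [hg0, hgs j']
              exact M.le_orthogonal_orthogonal.trans (Submodule.orthogonal_le (hfM j'))
            · rw [hgs i', hg0]
              exact hfM i'
            · rw [hgs i', hgs j']
              exact hfpair fun h => hij (congrArg Fin.succ h)
          · -- iSup
            have hsup1 : (⨆ i, g i) = M ⊔ ⨆ i, f i := by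
              apply le_antisymm
              · apply iSup_le
                intro i
                obtain rfl | ⟨i', rfl⟩ := i.eq_zero_or_eq_succ
                · rw [hg0]; exact le_sup_left
                · rw [hgs i']; exact (le_iSup f i').trans le_sup_right
              · apply sup_le
                · rw [← hg0]; exact le_iSup g 0
                · apply iSup_le
                  intro i'
                  rw [← hgs i']
                  exact le_iSup g i'.succ
            rw [hsup1, hfsup]
            apply le_antisymm
            · exact sup_le hMK inf_le_left
            · intro x hx
              exact mem_sup_of_mem hMK hx
          · intro i
            obtain rfl | ⟨i', rfl⟩ := i.eq_zero_or_eq_succ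
            · rw [hg0]; exact hMinv
            · rw [hgs i']; exact hfinv i'
          · intro i
            obtain rfl | ⟨i', rfl⟩ := i.eq_zero_or_eq_succ
            · rw [hg0]; exact hMmin
            · rw [hgs i']; exact hfmin i'
    -- apply to the whole space
    have htopc : IsClosed ((⊤ : Submodule ℂ H) : Set H) := by
      rw [Submodule.top_coe]; exact isClosed_univ
    have htopinv : ∀ a : A, ∀ x ∈ (⊤ : Submodule ℂ H), π a x ∈ (⊤ : Submodule ℂ H) :=
      fun a x _ => Submodule.mem_top
    obtain ⟨r, hr1, hr2, hr3, _⟩ := exists_scalar σ π U hcov hirr ⊤ htopinv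
    have hlt : r * (Fintype.card G : ℝ) < (Fintype.card G + 1 : ℕ) := by
      push_cast
      nlinarith
    obtain ⟨m, f, hfc, hf0, _, hfpair, hfsup, hfinv, hfmin⟩ :=
      decomp (Fintype.card G + 1) ⊤ htopc htopinv r hr1 hlt
    exact ⟨m, f, hfc, hf0, hfpair, hfsup, hfinv, hfmin⟩
end

section
/- Let 𝔄 be a von Neumann algebra on a complex Hilbert space H, and let p_1 and p_2 be projections in 𝔄 such that the range of p_2 is not contained in the range of p_1. Let s ∈ 𝔄 be the orthogonal projection of H onto the closure of (range p_1) + (range p_2). If p_2 is a minimal projection in 𝔄, then e = s − p_1 is a minimal projection in 𝔄. -/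
variable {H : Type*} [NormedAddCommGroup H] [InnerProductSpace ℂ H] [CompleteSpace H]

section CommuteCfc

open Polynomial in
lemma commute_cfcHom_of_commute {A : Type*} [CStarAlgebra A] {a u : A} (ha : IsSelfAdjoint a)
    (hu : Commute u a) (g : C(spectrum ℝ a, ℝ)) :
    Commute u (cfcHom ha (R := ℝ) g) := by
  have hclosed : IsClosed {x : A | Commute u x} := by
    have : {x : A | Commute u x} = (fun x => u * x - x * u) ⁻¹' {0} := by
      ext x; simp [Commute, SemiconjBy, sub_eq_zero]
    rw [this]
    exact isClosed_singleton.preimage (by fun_prop)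
  have hpoly : ∀ p : ℝ[X], Commute u (aeval a p) := by
    intro p
    induction p using Polynomial.induction_on with
    | C r => simp only [aeval_C]; exact Algebra.commute_algebraMap_right r u
    | add p q hp hq => simpa [map_add] using hp.add_right hq
    | monomial n r hp =>
        simp only [map_mul, map_pow, aeval_C, aeval_X]
        have h1 : Commute u (algebraMap ℝ A r) := (Algebra.commutes r u).symm
        exact h1.mul_right (hu.pow_right _)
  have hdense := polynomialFunctions.topologicalClosure (spectrum ℝ a)
  have hg : g ∈ closure (polynomialFunctions (spectrum ℝ a) : Set C(spectrum ℝ a, ℝ)) := by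
    rw [← Subalgebra.topologicalClosure_coe, hdense]; trivial
  have hsub : (polynomialFunctions (spectrum ℝ a) : Set C(spectrum ℝ a, ℝ)) ⊆
      (cfcHom ha (R := ℝ)) ⁻¹' {x : A | Commute u x} := by
    rw [polynomialFunctions_coe]
    rintro _ ⟨p, rfl⟩
    have : cfcHom ha (R := ℝ) (p.toContinuousMapOn (spectrum ℝ a)) = aeval a p := by
      have h1 : cfc (fun x : ℝ => p.eval x) a = aeval a p := cfc_polynomial p a
      rwa [cfc_apply (fun x : ℝ => p.eval x) a ha (by fun_prop)] at h1
    simpa [this] using hpoly p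
  have hcl : IsClosed ((cfcHom ha (R := ℝ)) ⁻¹' {x : A | Commute u x}) :=
    hclosed.preimage (cfcHom_continuous ha)
  exact closure_minimal hsub hcl hg

lemma commute_cfc_of_commute {A : Type*} [CStarAlgebra A] {a u : A} (ha : IsSelfAdjoint a)
    (hu : Commute u a) (f : ℝ → ℝ) : Commute u (cfc f a) := by
  by_cases hf : ContinuousOn f (spectrum ℝ a)
  · rw [cfc_apply f a ha hf]
    exact commute_cfcHom_of_commute ha hu _
  · rw [cfc_apply_of_not_continuousOn a hf]
    exact Commute.zero_right u

end CommuteCfc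

set_option linter.unusedSectionVars false

lemma vn_mem_iff_commutant (𝔄 : VonNeumannAlgebra H) (x : H →L[ℂ] H) :
    x ∈ 𝔄 ↔ ∀ u ∈ 𝔄.commutant, u * x = x * u := by
  conv_lhs => rw [← 𝔄.commutant_commutant]
  exact VonNeumannAlgebra.mem_commutant_iff

lemma cfc_mem_vn (𝔄 : VonNeumannAlgebra H) {c : H →L[ℂ] H} (hc : c ∈ 𝔄)
    (hsa : IsSelfAdjoint c) (f : ℝ → ℝ) : cfc f c ∈ 𝔄 := by
  rw [vn_mem_iff_commutant] at hc ⊢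
  intro u hu
  exact commute_cfc_of_commute hsa (hc u hu) f

lemma smul_mem_vn (𝔄 : VonNeumannAlgebra H) {c : H →L[ℂ] H} (hc : c ∈ 𝔄) (z : ℂ) :
    z • c ∈ 𝔄 := by
  rw [vn_mem_iff_commutant] at hc ⊢
  intro u hu
  rw [mul_smul_comm, smul_mul_assoc, hc u hu]

lemma idem_fix {q : H →L[ℂ] H} (hq : IsIdempotentElem q) {z : H}
    (hz : z ∈ LinearMap.range (q : H →ₗ[ℂ] H)) : q z = z := by
  obtain ⟨y, rfl⟩ := hz
  calc q (q y) = (q * q) y := rfl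
  _ = q y := by rw [hq]

lemma comp_eq_of_range_le {p q : H →L[ℂ] H} (hp : IsIdempotentElem p)
    (h : LinearMap.range (q : H →ₗ[ℂ] H) ≤ LinearMap.range (p : H →ₗ[ℂ] H)) : p * q = q := by
  ext x; exact idem_fix hp (h ⟨x, rfl⟩)

lemma range_le_of_comp {p q : H →L[ℂ] H} (h : p * q = q) :
    LinearMap.range (q : H →ₗ[ℂ] H) ≤ LinearMap.range (p : H →ₗ[ℂ] H) := by
  rintro _ ⟨y, rfl⟩
  have hy : p (q y) = (p * q) y := rfl
  rw [h] at hy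
  exact ⟨q y, hy⟩

lemma idem_range_closed {q : H →L[ℂ] H} (hq : IsIdempotentElem q) :
    IsClosed ((LinearMap.range (q : H →ₗ[ℂ] H) : Submodule ℂ H) : Set H) := by
  have : ((LinearMap.range (q : H →ₗ[ℂ] H) : Submodule ℂ H) : Set H) = {x | q x = x} := by
    ext x
    constructor
    · intro hx; exact idem_fix hq hx
    · intro hx; exact ⟨x, hx⟩
  rw [this]
  exact isClosed_eq q.continuous continuous_id

lemma orthoProj_mem (𝔄 : VonNeumannAlgebra H) (W : Submodule ℂ H) (hW : IsClosed (W : Set H))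
    (hinv : ∀ u ∈ 𝔄.commutant, ∀ x ∈ W, u x ∈ W) :
    ∃ P : H →L[ℂ] H, IsProjectionCLM P ∧ P ∈ 𝔄 ∧ LinearMap.range (P : H →ₗ[ℂ] H) = W := by
  haveI : CompleteSpace W := hW.completeSpace_coe
  set P : H →L[ℂ] H := W.subtypeL ∘L W.orthogonalProjectionOnto with hPdef
  have hfix : ∀ x ∈ W, P x = x := fun x hx => Submodule.starProjection_eq_self_iff.mpr hx
  have hmemW : ∀ x, P x ∈ W := fun x => (W.orthogonalProjectionOnto x).2
  have hsa : IsSelfAdjoint P := isSelfAdjoint_starProjection W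
  have hidem : IsIdempotentElem P := by
    ext x
    exact hfix _ (hmemW x)
  have hrange : LinearMap.range (P : H →ₗ[ℂ] H) = W := by
    apply le_antisymm
    · rintro _ ⟨x, rfl⟩; exact hmemW x
    · intro x hx; exact ⟨x, hfix x hx⟩
  refine ⟨P, ⟨hsa, hidem⟩, ?_, hrange⟩
  rw [vn_mem_iff_commutant]
  intro u hu
  have hu' : star u ∈ 𝔄.commutant := star_mem hu
  have h1 : P * u * P = u * P := by
    ext x
    exact hfix _ (hinv u hu _ (hmemW x))
  have h2 : P * star u * P = star u * P := by
    ext x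
    exact hfix _ (hinv _ hu' _ (hmemW x))
  have h4 := congrArg star h2
  simp only [star_mul, star_star, hsa.star_eq] at h4
  calc u * P = P * u * P := h1.symm
  _ = P * (u * P) := by rw [mul_assoc]
  _ = P * u := h4

/-- The key "corner is scalar" lemma: a nonzero positive operator of `𝔄` supported in the
range of a minimal projection `p₂` is a positive multiple of `p₂`. -/
lemma scalar_of_minimal (𝔄 : VonNeumannAlgebra H) {p₂ c : H →L[ℂ] H}
    (hmin : IsMinimalProjectionIn 𝔄 p₂)
    (hcA : c ∈ 𝔄) (hsa : IsSelfAdjoint c)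
    (hspec : ∀ x ∈ spectrum ℝ c, 0 ≤ x)
    (hcp : c * p₂ = c) (hpc : p₂ * c = c) (hc0 : c ≠ 0) :
    ∃ lam : ℝ, 0 < lam ∧ c = ((lam : ℝ) : ℂ) • p₂ := by
  obtain ⟨⟨hp₂sa, hp₂idem⟩, hp₂A, hp₂0, hminimal⟩ := hmin
  -- no two distinct positive spectral points
  have key : ∀ α β : ℝ, α ∈ spectrum ℝ c → β ∈ spectrum ℝ c → 0 < α → α < β → False := by
    intro α β hα hβ hα0 hαβ
    set m : ℝ := (α + β) / 2 with hm
    have hαm : α < m := by simp only [hm]; linarith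
    have hmβ : m < β := by simp only [hm]; linarith
    have hm0 : 0 < m := lt_trans hα0 hαm
    set gf : ℝ → ℝ := fun t => max 0 (min (t - α / 2) (m - t)) with hgf
    set hf : ℝ → ℝ := fun t => max (t - m) 0 with hhf
    have hgcont : Continuous gf := by
      apply Continuous.max continuous_const
      exact Continuous.min (by fun_prop) (by fun_prop)
    have hhcont : Continuous hf := by fun_prop
    set χg : ℝ → ℝ := fun t => gf t / max t (α / 2) with hχg
    set χh : ℝ → ℝ := fun t => hf t / max t m with hχh
    have hden_g : ∀ t : ℝ, max t (α / 2) ≠ 0 :=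
      fun t => ne_of_gt (lt_of_lt_of_le (by linarith) (le_max_right t (α / 2)))
    have hden_h : ∀ t : ℝ, max t m ≠ 0 :=
      fun t => ne_of_gt (lt_of_lt_of_le hm0 (le_max_right t m))
    have hχgcont : Continuous χg :=
      hgcont.div (continuous_id.max continuous_const) hden_g
    have hχhcont : Continuous χh :=
      hhcont.div (continuous_id.max continuous_const) hden_h
    have hgid : ∀ t, t * χg t = gf t := by
      intro t
      rcases le_or_gt t (α / 2) with ht | ht
      · have hg0 : gf t = 0 := by
          have h1 : min (t - α / 2) (m - t) ≤ t - α / 2 := min_le_left _ _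
          simp only [hgf]
          rw [max_eq_left (by linarith)]
        simp [hχg, hg0]
      · have hmax : max t (α / 2) = t := max_eq_left ht.le
        have htne : t ≠ 0 := ne_of_gt (lt_trans (by linarith) ht)
        simp only [hχg, hmax]
        rw [mul_comm, div_mul_cancel₀ _ htne]
    have hhid : ∀ t, χh t * t = hf t := by
      intro t
      rcases le_or_gt t m with ht | ht
      · have hh0 : hf t = 0 := by
          simp only [hhf]
          rw [max_eq_right (by linarith)]
        simp [hχh, hh0]
      · have hmax : max t m = t := max_eq_left ht.le
        have htne : t ≠ 0 := ne_of_gt (lt_trans hm0 ht)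
        simp only [hχh, hmax]
        rw [div_mul_cancel₀ _ htne]
    have hgh : ∀ t, hf t * gf t = 0 := by
      intro t
      rcases le_or_gt t m with ht | ht
      · have hh0 : hf t = 0 := by simp only [hhf]; rw [max_eq_right (by linarith)]
        rw [hh0, zero_mul]
      · have hg0 : gf t = 0 := by
          simp only [hgf]
          rw [max_eq_left]
          exact le_trans (min_le_right _ _) (by linarith)
        rw [hg0, mul_zero]
    have hgα : gf α ≠ 0 := by
      have h1 : 0 < min (α - α / 2) (m - α) := lt_min (by linarith) (by linarith)
      have h2 : 0 < gf α := lt_of_lt_of_le h1 (le_max_right _ _)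
      exact ne_of_gt h2
    have hhβ : hf β ≠ 0 := by
      have h2 : 0 < hf β := lt_of_lt_of_le (by linarith : (0:ℝ) < β - m) (le_max_left _ _)
      exact ne_of_gt h2
    -- the operators
    set gc := cfc gf c with hgc
    set hc' := cfc hf c with hhc
    have hgc_fact : gc = c * cfc χg c := by
      have h1 : cfc gf c = cfc (fun t : ℝ => t * χg t) c :=
        cfc_congr (fun t _ => (hgid t).symm)
      rw [hgc, h1, cfc_mul (fun t : ℝ => t) χg c (by fun_prop) hχgcont.continuousOn,
        cfc_id' ℝ c]
    have hhc_fact : hc' = cfc χh c * c := by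
      have h1 : cfc hf c = cfc (fun t : ℝ => χh t * t) c :=
        cfc_congr (fun t _ => (hhid t).symm)
      rw [hhc, h1, cfc_mul χh (fun t : ℝ => t) c hχhcont.continuousOn (by fun_prop),
        cfc_id' ℝ c]
    have hp₂gc : p₂ * gc = gc := by
      rw [hgc_fact, ← mul_assoc, hpc]
    have hrangegc : LinearMap.range (gc : H →ₗ[ℂ] H) ≤ LinearMap.range (p₂ : H →ₗ[ℂ] H) := range_le_of_comp hp₂gc
    have hgcA : gc ∈ 𝔄 := cfc_mem_vn 𝔄 hcA hsa gf
    have hgc0 : gc ≠ 0 := by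
      intro h0
      have h1 : cfc gf c = cfc (0 : ℝ → ℝ) c := by rw [← hgc, h0, cfc_zero]
      have h2 := eqOn_of_cfc_eq_cfc (f := gf) (g := 0) h1 hgcont.continuousOn (by fun_prop)
      exact hgα (h2 hα)
    -- the invariant subspace
    set W := (LinearMap.range (gc : H →ₗ[ℂ] H)).topologicalClosure with hW
    have hWclosed : IsClosed (W : Set H) := Submodule.isClosed_topologicalClosure _
    have hWinv : ∀ u ∈ 𝔄.commutant, ∀ x ∈ W, u x ∈ W := by
      intro u hu x hx
      have hcomm : gc * u = u * gc := VonNeumannAlgebra.mem_commutant_iff.mp hu gc hgcA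
      have hmapsto : Set.MapsTo u (LinearMap.range (gc : H →ₗ[ℂ] H) : Set H) (LinearMap.range (gc : H →ₗ[ℂ] H) : Set H) := by
        rintro _ ⟨y, rfl⟩
        refine ⟨u y, ?_⟩
        calc gc (u y) = (gc * u) y := rfl
        _ = (u * gc) y := by rw [hcomm]
        _ = u (gc y) := rfl
      have hx' : (x : H) ∈ closure ((LinearMap.range (gc : H →ₗ[ℂ] H) : Submodule ℂ H) : Set H) := by
        rw [← Submodule.topologicalClosure_coe]; exact hx
      have h5 := hmapsto.closure u.continuous hx'
      show u x ∈ ((LinearMap.range (gc : H →ₗ[ℂ] H)).topologicalClosure : Set H)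
      rw [Submodule.topologicalClosure_coe]
      exact h5
    obtain ⟨P, hPproj, hPA, hPrange⟩ := orthoProj_mem 𝔄 W hWclosed hWinv
    have hPle : LinearMap.range (P : H →ₗ[ℂ] H) ≤ LinearMap.range (p₂ : H →ₗ[ℂ] H) := by
      rw [hPrange, hW]
      exact (LinearMap.range (gc : H →ₗ[ℂ] H)).topologicalClosure_minimal hrangegc (idem_range_closed hp₂idem)
    rcases hminimal P hPproj hPA hPle with hP0 | hPp₂
    · apply absurd ?_ hgc0
      ext x
      have hx : gc x ∈ W := (LinearMap.range (gc : H →ₗ[ℂ] H)).le_topologicalClosure (LinearMap.mem_range_self _ x)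
      rw [← hPrange, hP0] at hx
      obtain ⟨y, hy⟩ := hx
      have hy' : (0 : H →L[ℂ] H) y = gc x := hy
      simpa using hy'.symm
    · -- range p₂ = W; then hc' vanishes
      rw [hPp₂] at hPrange
      have hprod : hc' * gc = 0 := by
        rw [hhc, hgc, ← cfc_mul hf gf c hhcont.continuousOn hgcont.continuousOn]
        have : cfc (fun t => hf t * gf t) c = cfc (0 : ℝ → ℝ) c :=
          cfc_congr (fun t _ => hgh t)
        rw [this, cfc_zero]
      have hvan : ∀ x ∈ closure ((LinearMap.range (gc : H →ₗ[ℂ] H) : Submodule ℂ H) : Set H), hc' x = 0 := by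
        intro x hx
        have hsubset : ((LinearMap.range (gc : H →ₗ[ℂ] H) : Submodule ℂ H) : Set H) ⊆ {z | hc' z = 0} := by
          rintro _ ⟨y, rfl⟩
          calc hc' (gc y) = (hc' * gc) y := rfl
          _ = 0 := by rw [hprod]; rfl
        exact closure_minimal hsubset (isClosed_eq hc'.continuous continuous_const) hx
      have hhcp₂ : hc' * p₂ = 0 := by
        ext x
        have hx : p₂ x ∈ W := by
          rw [← hPrange]
          exact LinearMap.mem_range_self _ x
        have hx' : (p₂ x : H) ∈ closure ((LinearMap.range (gc : H →ₗ[ℂ] H) : Submodule ℂ H) : Set H) := by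
          rw [← Submodule.topologicalClosure_coe]; exact hx
        exact hvan _ hx'
      have hhcp₂' : hc' * p₂ = hc' := by
        rw [hhc_fact, mul_assoc, hcp]
      have hhc0 : hc' = 0 := by rw [← hhcp₂', hhcp₂]
      have h1 : cfc hf c = cfc (0 : ℝ → ℝ) c := by rw [← hhc, hhc0, cfc_zero]
      have h2 := eqOn_of_cfc_eq_cfc (f := hf) (g := 0) h1 hhcont.continuousOn (by fun_prop)
      exact hhβ (h2 hβ)
  -- there is a positive spectral point
  have hlam : ∃ lam ∈ spectrum ℝ c, 0 < lam := by
    by_contra hno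
    push_neg at hno
    apply hc0
    have h1 : cfc (fun t : ℝ => t) c = cfc (0 : ℝ → ℝ) c :=
      cfc_congr (fun x hx => le_antisymm (hno x hx) (hspec x hx))
    rwa [cfc_id' ℝ c, cfc_zero] at h1
  obtain ⟨lam, hlam_mem, hlam_pos⟩ := hlam
  have hsub : ∀ x ∈ spectrum ℝ c, x = 0 ∨ x = lam := by
    intro x hx
    rcases eq_or_lt_of_le (hspec x hx) with h0 | hpos
    · exact Or.inl h0.symm
    · rcases lt_trichotomy x lam with h | h | h
      · exact absurd (key x lam hx hlam_mem hpos h) (fun f => f)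
      · exact Or.inr h
      · exact absurd (key lam x hlam_mem hx hlam_pos h) (fun f => f)
  -- c * c = lam • c
  have hcc : c * c = lam • c := by
    have h1 : cfc (fun t : ℝ => t * t - lam * t) c = cfc (0 : ℝ → ℝ) c := by
      apply cfc_congr
      intro x hx
      rcases hsub x hx with h | h <;> (rw [h]; ring_nf; rfl)
    have h2 : cfc (fun t : ℝ => t * t - lam * t) c
        = cfc (fun t : ℝ => t * t) c - cfc (fun t : ℝ => lam * t) c := by
      exact cfc_sub (fun t : ℝ => t * t) (fun t : ℝ => lam * t) c (by fun_prop) (by fun_prop)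
    rw [h2, cfc_zero] at h1
    have h3 : cfc (fun t : ℝ => t * t) c = c * c := by
      rw [cfc_mul (fun t : ℝ => t) (fun t : ℝ => t) c (by fun_prop) (by fun_prop), cfc_id' ℝ c]
    have h4 : cfc (fun t : ℝ => lam * t) c = lam • c := by
      rw [cfc_const_mul lam (fun t : ℝ => t) c (by fun_prop), cfc_id' ℝ c]
    rw [h3, h4] at h1
    exact sub_eq_zero.mp h1
  refine ⟨lam, hlam_pos, ?_⟩
  have hsmul : ∀ (rr : ℝ) (T : H →L[ℂ] H), rr • T = ((rr : ℝ) : ℂ) • T := by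
    intro rr T
    rw [show ((rr : ℝ) : ℂ) = algebraMap ℝ ℂ rr from rfl, algebraMap_smul]
  set μ : ℝ := lam⁻¹ with hμ
  set r : H →L[ℂ] H := ((μ : ℝ) : ℂ) • c with hr
  have hrA : r ∈ 𝔄 := smul_mem_vn 𝔄 hcA _
  have hrsa : IsSelfAdjoint r := by
    rw [hr, IsSelfAdjoint, star_smul, Complex.star_def, Complex.conj_ofReal, hsa.star_eq]
  have hccℂ : c * c = ((lam : ℝ) : ℂ) • c := by rw [← hsmul]; exact hcc
  have hμℂ : ((μ : ℝ) : ℂ) ≠ 0 := Complex.ofReal_ne_zero.mpr (inv_ne_zero (ne_of_gt hlam_pos))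
  have hridem : IsIdempotentElem r := by
    rw [IsIdempotentElem, hr, smul_mul_assoc, mul_smul_comm, hccℂ, smul_smul, smul_smul]
    congr 1
    rw [hμ]
    push_cast
    field_simp
  have hp₂r : p₂ * r = r := by rw [hr, mul_smul_comm, hpc]
  rcases hminimal r ⟨hrsa, hridem⟩ hrA (range_le_of_comp hp₂r) with h0 | hp
  · exfalso
    apply hc0
    rw [hr] at h0
    exact (smul_eq_zero.mp h0).resolve_left hμℂ
  · have h6 := congrArg (fun T : H →L[ℂ] H => ((lam : ℝ) : ℂ) • T) hp
    simp only [hr, smul_smul] at h6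
    have hone : ((lam : ℝ) : ℂ) * ((μ : ℝ) : ℂ) = 1 := by
      rw [hμ]
      push_cast
      field_simp
      exact div_self (Complex.ofReal_ne_zero.mpr (ne_of_gt hlam_pos))
    rw [hone, one_smul] at h6
    exact h6

/-- Let `p₁, p₂` be projections in a von Neumann algebra `𝔄` with `range p₂ ⊄ range p₁`, and
let `s ∈ 𝔄` be the orthogonal projection onto the closure of `range p₁ + range p₂`.  If `p₂`
is a minimal projection in `𝔄`, then `s - p₁` is a minimal projection in `𝔄`. -/
theorem sup_sub_projection_minimal
    (𝔄 : VonNeumannAlgebra H) (p₁ p₂ s : H →L[ℂ] H)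
    (hp₁ : IsProjectionCLM p₁) (hp₁A : p₁ ∈ 𝔄)
    (hp₂ : IsProjectionCLM p₂) (hp₂A : p₂ ∈ 𝔄)
    (hnle : ¬ LinearMap.range (p₂ : H →ₗ[ℂ] H) ≤ LinearMap.range (p₁ : H →ₗ[ℂ] H))
    (hs : IsProjectionCLM s) (hsA : s ∈ 𝔄)
    (hsrange : LinearMap.range (s : H →ₗ[ℂ] H)
      = (LinearMap.range (p₁ : H →ₗ[ℂ] H) ⊔ LinearMap.range (p₂ : H →ₗ[ℂ] H)).topologicalClosure)
    (hmin : IsMinimalProjectionIn 𝔄 p₂) :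
    IsMinimalProjectionIn 𝔄 (s - p₁) := by
  obtain ⟨hs_sa, hs_idem⟩ := hs
  obtain ⟨hp₁sa, hp₁idem⟩ := hp₁
  obtain ⟨hp₂sa, hp₂idem⟩ := hp₂
  have hr₁ : LinearMap.range (p₁ : H →ₗ[ℂ] H) ≤ LinearMap.range (s : H →ₗ[ℂ] H) := by
    rw [hsrange]
    exact le_trans le_sup_left (Submodule.le_topologicalClosure _)
  have hr₂ : LinearMap.range (p₂ : H →ₗ[ℂ] H) ≤ LinearMap.range (s : H →ₗ[ℂ] H) := by
    rw [hsrange]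
    exact le_trans le_sup_right (Submodule.le_topologicalClosure _)
  have hsp₁ : s * p₁ = p₁ := comp_eq_of_range_le hs_idem hr₁
  have hsp₂ : s * p₂ = p₂ := comp_eq_of_range_le hs_idem hr₂
  have hp₁s : p₁ * s = p₁ := by
    have h := congrArg star hsp₁
    rwa [star_mul, hs_sa.star_eq, hp₁sa.star_eq] at h
  have hp₂s : p₂ * s = p₂ := by
    have h := congrArg star hsp₂
    rwa [star_mul, hs_sa.star_eq, hp₂sa.star_eq] at h
  set q : H →L[ℂ] H := s - p₁ with hqdef
  have hq_sa : IsSelfAdjoint q := hs_sa.sub hp₁sa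
  have hq_idem : IsIdempotentElem q := by
    rw [IsIdempotentElem, hqdef, sub_mul, mul_sub, mul_sub, hs_idem.eq, hsp₁, hp₁s,
      hp₁idem.eq, sub_self, sub_zero]
  have hqA : q ∈ 𝔄 := sub_mem hsA hp₁A
  have hqp₁ : q * p₁ = 0 := by rw [hqdef, sub_mul, hsp₁, hp₁idem.eq, sub_self]
  have hqs : q * s = q := by rw [hqdef, sub_mul, hs_idem.eq, hp₁s]
  set a : H →L[ℂ] H := p₂ - p₁ * p₂ with hadef
  have hqp₂ : q * p₂ = a := by rw [hqdef, hadef, sub_mul, hsp₂]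
  have haA : a ∈ 𝔄 := sub_mem hp₂A (mul_mem hp₁A hp₂A)
  have hstar_a : star a = p₂ - p₂ * p₁ := by
    rw [hadef, star_sub, star_mul, hp₁sa.star_eq, hp₂sa.star_eq]
  have hap₂ : a * p₂ = a := by
    rw [hadef, sub_mul, hp₂idem.eq, mul_assoc, hp₂idem.eq]
  have hp₂sa' : p₂ * star a = star a := by
    rw [hstar_a, mul_sub, hp₂idem.eq, ← mul_assoc, hp₂idem.eq]
  have hqa : q * a = a := by
    rw [hadef, mul_sub, ← mul_assoc, hqp₁, zero_mul, sub_zero, hqp₂]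
  have ha0 : a ≠ 0 := by
    intro h0
    apply hnle
    have hpp : p₂ = p₁ * p₂ := by rwa [hadef, sub_eq_zero] at h0
    rintro _ ⟨y, rfl⟩
    refine ⟨p₂ y, ?_⟩
    calc p₁ (p₂ y) = (p₁ * p₂) y := rfl
    _ = p₂ y := by rw [← hpp]
  set c : H →L[ℂ] H := star a * a with hcdef
  have hcA : c ∈ 𝔄 := mul_mem (star_mem haA) haA
  have hc_sa : IsSelfAdjoint c := IsSelfAdjoint.star_mul_self a
  have hc_spec : ∀ x ∈ spectrum ℝ c, 0 ≤ x := spectrum_star_mul_self_nonneg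
  have hcp : c * p₂ = c := by rw [hcdef, mul_assoc, hap₂]
  have hpc : p₂ * c = c := by rw [hcdef, ← mul_assoc, hp₂sa']
  have hc0 : c ≠ 0 := by
    intro h0
    exact ha0 ((CStarRing.star_mul_self_eq_zero_iff a).mp (by rw [← hcdef]; exact h0))
  obtain ⟨lam, hlam_pos, hclam⟩ := scalar_of_minimal 𝔄 hmin hcA hc_sa hc_spec hcp hpc hc0
  set t : ℝ := Real.sqrt lam with htdef
  have ht_pos : 0 < t := Real.sqrt_pos.mpr hlam_pos
  have ht2 : t * t = lam := Real.mul_self_sqrt hlam_pos.le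
  have htne : ((t : ℝ) : ℂ) ≠ 0 := Complex.ofReal_ne_zero.mpr ht_pos.ne'
  set v : H →L[ℂ] H := ((t⁻¹ : ℝ) : ℂ) • a with hvdef
  have hvA : v ∈ 𝔄 := smul_mem_vn 𝔄 haA _
  have hstar_v : star v = ((t⁻¹ : ℝ) : ℂ) • star a := by
    rw [hvdef, star_smul, Complex.star_def, Complex.conj_ofReal]
  have hlamt : ((lam : ℝ) : ℂ) = ((t : ℝ) : ℂ) * ((t : ℝ) : ℂ) := by
    rw [← Complex.ofReal_mul, ht2]
  have hvv : star v * v = p₂ := by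
    rw [hstar_v, hvdef, smul_mul_assoc, mul_smul_comm, ← hcdef, hclam, smul_smul, smul_smul,
      ← Complex.ofReal_mul, ← Complex.ofReal_mul]
    have hsc : t⁻¹ * t⁻¹ * lam = 1 := by
      rw [← ht2]
      field_simp
    rw [hsc, Complex.ofReal_one, one_smul]
  have hqv : q * v = v := by rw [hvdef, mul_smul_comm, hqa]
  have hvp₂ : v * p₂ = v := by rw [hvdef, smul_mul_assoc, hap₂]
  have hp₂v' : p₂ * star v = star v := by rw [hstar_v, mul_smul_comm, hp₂sa']
  set g : H →L[ℂ] H := v * star v with hgdef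
  have hgsa : IsSelfAdjoint g := by rw [IsSelfAdjoint, hgdef, star_mul, star_star]
  have hsva : star v * a = (((t⁻¹ * lam) : ℝ) : ℂ) • p₂ := by
    rw [hstar_v, smul_mul_assoc, ← hcdef, hclam, smul_smul, ← Complex.ofReal_mul]
  have hga : g * a = a := by
    rw [hgdef, mul_assoc, hsva, mul_smul_comm, hvp₂, hvdef, smul_smul, ← Complex.ofReal_mul]
    have hsc : t⁻¹ * lam * t⁻¹ = 1 := by
      rw [← ht2]
      field_simp
    rw [hsc, Complex.ofReal_one, one_smul]
  have hqg : q * g = g := by rw [hgdef, ← mul_assoc, hqv]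
  -- range q is contained in the closure of range a
  have hqsub : ∀ x : H, q x ∈ closure ((LinearMap.range (a : H →ₗ[ℂ] H) : Submodule ℂ H) : Set H) := by
    intro x
    have h1 : q (s x) = q x := by
      have h2 : q (s x) = (q * s) x := rfl
      rw [hqs] at h2
      exact h2
    have h2 : s x ∈ closure ((LinearMap.range (p₁ : H →ₗ[ℂ] H) ⊔ LinearMap.range (p₂ : H →ₗ[ℂ] H) : Submodule ℂ H) : Set H) := by
      have h3 : s x ∈ LinearMap.range (s : H →ₗ[ℂ] H) := LinearMap.mem_range_self _ x
      rw [hsrange] at h3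
      rw [← Submodule.topologicalClosure_coe]
      exact h3
    have hmap : Set.MapsTo q
        ((LinearMap.range (p₁ : H →ₗ[ℂ] H) ⊔ LinearMap.range (p₂ : H →ₗ[ℂ] H) : Submodule ℂ H) : Set H)
        ((LinearMap.range (a : H →ₗ[ℂ] H) : Submodule ℂ H) : Set H) := by
      intro z hz
      obtain ⟨y₁, hy₁, y₂, hy₂, rfl⟩ := Submodule.mem_sup.mp hz
      obtain ⟨w₁, rfl⟩ := hy₁
      obtain ⟨w₂, rfl⟩ := hy₂
      have h4 : q ((p₁ : H →ₗ[ℂ] H) w₁ + (p₂ : H →ₗ[ℂ] H) w₂) = (q * p₁) w₁ + (q * p₂) w₂ := by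
        rw [map_add]; rfl
      rw [h4, hqp₁, hqp₂]
      refine ⟨w₂, ?_⟩
      simp
    rw [← h1]
    exact hmap.closure q.continuous h2
  have hgq : g * q = q := by
    ext x
    have h8 : ((LinearMap.range (a : H →ₗ[ℂ] H) : Submodule ℂ H) : Set H) ⊆ {z | g z = z} := by
      rintro _ ⟨y, rfl⟩
      calc g (a y) = (g * a) y := rfl
      _ = a y := by rw [hga]
    have h9 := closure_minimal h8 (isClosed_eq g.continuous continuous_id) (hqsub x)
    exact h9
  have hqg' : q * g = q := by
    have h := congrArg star hgq
    rwa [star_mul, hq_sa.star_eq, hgsa.star_eq] at h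
  have hvsv : g = q := hqg.symm.trans hqg'
  have hq0 : q ≠ 0 := by
    intro h0
    apply hnle
    have hsp : s = p₁ := by rwa [hqdef, sub_eq_zero] at h0
    rintro _ ⟨y, rfl⟩
    refine ⟨p₂ y, ?_⟩
    calc p₁ (p₂ y) = (p₁ * p₂) y := rfl
    _ = (s * p₂) y := by rw [hsp]
    _ = p₂ y := by rw [hsp₂]
  refine ⟨⟨hq_sa, hq_idem⟩, hqA, hq0, ?_⟩
  intro e he heA hre
  obtain ⟨he_sa, he_idem⟩ := he
  have hqe : q * e = e := comp_eq_of_range_le hq_idem hre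
  have heq : e * q = e := by
    have h := congrArg star hqe
    rwa [star_mul, hq_sa.star_eq, he_sa.star_eq] at h
  have hvsv' : v * star v = q := hvsv
  have hvev : v * (star v * e * v) = e * v := by
    calc v * (star v * e * v) = v * (star v * (e * v)) := by rw [mul_assoc (star v) e v]
    _ = v * star v * (e * v) := by rw [← mul_assoc]
    _ = q * (e * v) := by rw [hvsv']
    _ = q * e * v := by rw [← mul_assoc]
    _ = e * v := by rw [hqe]
  have he'A : star v * e * v ∈ 𝔄 := mul_mem (mul_mem (star_mem hvA) heA) hvA
  have he'sa : IsSelfAdjoint (star v * e * v) := by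
    rw [IsSelfAdjoint, star_mul, star_mul, star_star, he_sa.star_eq, ← mul_assoc]
  have he'idem : IsIdempotentElem (star v * e * v) := by
    rw [IsIdempotentElem]
    calc star v * e * v * (star v * e * v)
        = star v * e * (v * (star v * e * v)) := by rw [mul_assoc (star v * e) v _]
    _ = star v * e * (e * v) := by rw [hvev]
    _ = star v * (e * (e * v)) := by rw [mul_assoc]
    _ = star v * (e * e * v) := by rw [← mul_assoc e e v]
    _ = star v * (e * v) := by rw [he_idem.eq]
    _ = star v * e * v := by rw [← mul_assoc]
  have hp₂e' : p₂ * (star v * e * v) = star v * e * v := by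
    rw [← mul_assoc, ← mul_assoc, hp₂v']
  rcases hmin.2.2.2 _ ⟨he'sa, he'idem⟩ he'A (range_le_of_comp hp₂e') with h0 | hp
  · left
    have hev : star (e * v) * (e * v) = star v * e * v := by
      rw [star_mul, he_sa.star_eq]
      calc star v * e * (e * v) = star v * (e * (e * v)) := by rw [mul_assoc]
      _ = star v * (e * e * v) := by rw [← mul_assoc e e v]
      _ = star v * (e * v) := by rw [he_idem.eq]
      _ = star v * e * v := by rw [← mul_assoc]
    have hev0 : e * v = 0 := (CStarRing.star_mul_self_eq_zero_iff _).mp (hev.trans h0)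
    have he2 : e = e * v * star v := by
      rw [mul_assoc, hvsv', heq]
    rw [he2, hev0, zero_mul]
  · right
    have hL : v * (star v * e * v) * star v = e * q := by
      calc v * (star v * e * v) * star v = (e * v) * star v := by rw [hvev]
      _ = e * (v * star v) := by rw [mul_assoc]
      _ = e * q := by rw [hvsv']
    have hR : v * (star v * e * v) * star v = q := by
      rw [hp, hvp₂, hvsv']
    have heqq : e * q = q := hL.symm.trans hR
    calc e = e * q := heq.symm
    _ = q := heqq
end

section
/- Let 𝔄 be a von Neumann algebra on a complex Hilbert space H and let q_1, …, q_n be projections in 𝔄 such that for each i with 2 ≤ i ≤ n, the closed subspace spanned by range q_1, …, range q_{i−1} intersects range q_i trivially. For each i let s_i ∈ 𝔄 be the orthogonal projection onto the closed subspace spanned by range q_1, …, range q_i, and define p_1 = q_1 and p_i = s_i − s_{i−1} for 2 ≤ i ≤ n. Then each p_i is a projection belonging to 𝔄, the p_i are pairwise orthogonal (p_i p_j = 0 for i ≠ j), ∑_{i} p_i = s_n, and if every q_i is a minimal projection in 𝔄 then every p_i is a minimal projection in 𝔄. -/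
variable {H : Type*} [NormedAddCommGroup H] [InnerProductSpace ℂ H] [CompleteSpace H]

open scoped InnerProductSpace

namespace OMPAux

lemma inner_selfadj {T : H →L[ℂ] H} (hT : IsSelfAdjoint T) (x y : H) :
    ⟪T x, y⟫_ℂ = ⟪x, T y⟫_ℂ := by
  conv_lhs => rw [← hT.adjoint_eq]
  exact ContinuousLinearMap.adjoint_inner_left _ _ _

omit [CompleteSpace H] in
lemma apply_eq_self {e : H →L[ℂ] H} (he : IsIdempotentElem e) {x : H}
    (hx : x ∈ LinearMap.range (e : H →ₗ[ℂ] H)) : e x = x := by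
  obtain ⟨y, rfl⟩ := hx
  have := congrArg (fun T : H →L[ℂ] H => T y) he
  simpa using this

lemma comp_eq_of_range_le {e f : H →L[ℂ] H} (he : IsProjectionCLM e) (hf : IsProjectionCLM f)
    (h : LinearMap.range (e : H →ₗ[ℂ] H) ≤ LinearMap.range (f : H →ₗ[ℂ] H)) : f * e = e ∧ e * f = e := by
  have h1 : f * e = e := by
    ext x
    exact apply_eq_self hf.2 (h ⟨x, rfl⟩)
  refine ⟨h1, ?_⟩
  have := congrArg star h1
  rwa [star_mul, he.1, hf.1] at this

lemma projection_eq_of_range_eq {e f : H →L[ℂ] H} (he : IsProjectionCLM e)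
    (hf : IsProjectionCLM f) (h : LinearMap.range (e : H →ₗ[ℂ] H) = LinearMap.range (f : H →ₗ[ℂ] H)) : e = f := by
  have h1 := (comp_eq_of_range_le he hf h.le).2
  have h2 := (comp_eq_of_range_le hf he h.ge).1
  rw [← h1, h2]

omit [CompleteSpace H] in
lemma range_eq_ker {e : H →L[ℂ] H} (he : IsIdempotentElem e) :
    LinearMap.range (e : H →ₗ[ℂ] H) = LinearMap.ker ((1 - e : H →L[ℂ] H) : H →ₗ[ℂ] H) := by
  ext x
  constructor
  · intro hx
    have h := apply_eq_self he hx
    simp only [LinearMap.mem_ker, ContinuousLinearMap.coe_coe, ContinuousLinearMap.coe_sub', Pi.sub_apply,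
      ContinuousLinearMap.one_apply, h, sub_self]
  · intro hx
    have h : x - e x = 0 := by simpa using hx
    exact ⟨x, by rw [← sub_eq_zero, ← neg_sub, ContinuousLinearMap.coe_coe, h, neg_zero]⟩

omit [CompleteSpace H] in
lemma isClosed_range {e : H →L[ℂ] H} (he : IsIdempotentElem e) :
    IsClosed ((LinearMap.range (e : H →ₗ[ℂ] H) : Submodule ℂ H) : Set H) := by
  rw [range_eq_ker he]
  exact ContinuousLinearMap.isClosed_ker _

omit [CompleteSpace H] in
lemma ne_zero_of_range_ne_bot {e : H →L[ℂ] H} (hne : e ≠ 0) : LinearMap.range (e : H →ₗ[ℂ] H) ≠ ⊥ := by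
  intro h
  apply hne
  ext x
  have : e x ∈ LinearMap.range (e : H →ₗ[ℂ] H) := ⟨x, rfl⟩
  rw [h] at this
  simpa using this

section projK

noncomputable def projK (K : Submodule ℂ H) [CompleteSpace K] : H →L[ℂ] H :=
  K.subtypeL ∘L K.orthogonalProjectionOnto

lemma projK_apply_of_mem {K : Submodule ℂ H} [CompleteSpace K] {y : H} (hy : y ∈ K) :
    projK K y = y := by
  simp only [projK, ContinuousLinearMap.comp_apply, Submodule.subtypeL_apply]
  exact Submodule.starProjection_eq_self_iff.mpr hy

lemma projK_mem_K (K : Submodule ℂ H) [CompleteSpace K] (x : H) : projK K x ∈ K :=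
  K.coe_mem (K.orthogonalProjectionOnto x)

lemma projK_isProjection (K : Submodule ℂ H) [CompleteSpace K] : IsProjectionCLM (projK K) := by
  refine ⟨isSelfAdjoint_starProjection K, ?_⟩
  ext x
  exact projK_apply_of_mem (projK_mem_K K x)

lemma projK_range (K : Submodule ℂ H) [CompleteSpace K] : LinearMap.range (projK K : H →ₗ[ℂ] H) = K := by
  apply le_antisymm
  · rintro _ ⟨x, rfl⟩
    exact projK_mem_K K x
  · intro y hy
    exact ⟨y, projK_apply_of_mem hy⟩

/-- If a closed subspace is invariant under `y` and `star y`, the projection onto it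
commutes with `y`. -/
lemma projK_commute {K : Submodule ℂ H} [CompleteSpace K] {y : H →L[ℂ] H}
    (hsa : IsSelfAdjoint (projK K))
    (hy : ∀ z ∈ K, y z ∈ K) (hy' : ∀ z ∈ K, star y z ∈ K) :
    y * projK K = projK K * y := by
  set R := projK K with hR
  have e1 : R * y * R = y * R := by
    ext x
    simp only [ContinuousLinearMap.mul_apply]
    exact projK_apply_of_mem (hy _ (projK_mem_K K x))
  have e2 : R * star y * R = star y * R := by
    ext x
    simp only [ContinuousLinearMap.mul_apply]
    exact projK_apply_of_mem (hy' _ (projK_mem_K K x))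
  have e3 := congrArg star e2
  rw [star_mul, star_mul, star_star, hsa.star_eq] at e3
  rw [star_mul, star_star, hsa.star_eq, ← mul_assoc] at e3
  rw [e1] at e3
  exact e3

end projK

section vN

lemma mem_vN_iff (𝔄 : VonNeumannAlgebra H) (x : H →L[ℂ] H) :
    x ∈ 𝔄 ↔ ∀ y ∈ 𝔄.commutant, y * x = x * y := by
  conv_lhs => rw [← 𝔄.commutant_commutant]
  exact VonNeumannAlgebra.mem_commutant_iff

omit [CompleteSpace H] in
lemma isClosed_centralizer (s : Set (H →L[ℂ] H)) : IsClosed (Set.centralizer s) := by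
  have : Set.centralizer s = ⋂ m ∈ s, {x | m * x = x * m} := by
    ext x; simp [Set.mem_centralizer_iff]
  rw [this]
  exact isClosed_biInter fun m _ => isClosed_eq (continuous_mul_left m) (continuous_mul_right m)

lemma isClosed_vN (𝔄 : VonNeumannAlgebra H) : IsClosed ((𝔄 : Set (H →L[ℂ] H))) := by
  rw [← 𝔄.centralizer_centralizer]
  exact isClosed_centralizer _

lemma cfc_mem_elemental (b : H →L[ℂ] H) (hb : IsSelfAdjoint b) (f : ℝ → ℝ) :
    cfc f b ∈ StarAlgebra.elemental ℂ b := by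
  by_cases hf : ContinuousOn f (spectrum ℝ b)
  · rw [cfc_apply f b hb hf, cfcHom_real_eq_restrict hb]
    simp only [SpectrumRestricts.starAlgHom, StarAlgHom.comp_apply,
      StarAlgHom.restrictScalars_apply]
    rw [cfcHom_eq_of_isStarNormal]
    exact SetLike.coe_mem _
  · rw [cfc_apply_of_not_continuousOn b hf]
    exact zero_mem _

lemma cfc_mem_vN (𝔄 : VonNeumannAlgebra H) {b : H →L[ℂ] H} (hmem : b ∈ 𝔄)
    (hb : IsSelfAdjoint b) (f : ℝ → ℝ) : cfc f b ∈ 𝔄 := by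
  have h := StarAlgebra.elemental.le_of_mem (S := 𝔄.toStarSubalgebra) (isClosed_vN 𝔄) hmem
  exact h (cfc_mem_elemental b hb f)

/-- The projection onto the closure of the range of an element of a von Neumann algebra
belongs to the algebra. -/
lemma rangeProj_mem (𝔄 : VonNeumannAlgebra H) {A : H →L[ℂ] H} (hA : A ∈ 𝔄) :
    haveI : CompleteSpace ((LinearMap.range (A : H →ₗ[ℂ] H)).topologicalClosure) :=
      (Submodule.isClosed_topologicalClosure _).completeSpace_coe
    projK ((LinearMap.range (A : H →ₗ[ℂ] H)).topologicalClosure) ∈ 𝔄 := by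
  haveI : CompleteSpace ((LinearMap.range (A : H →ₗ[ℂ] H)).topologicalClosure) :=
    (Submodule.isClosed_topologicalClosure _).completeSpace_coe
  set K := (LinearMap.range (A : H →ₗ[ℂ] H)).topologicalClosure with hK
  rw [mem_vN_iff]
  intro y hy
  have hyA : A * y = y * A := (VonNeumannAlgebra.mem_commutant_iff.mp hy) A hA
  have hysA : A * star y = star y * A :=
    (VonNeumannAlgebra.mem_commutant_iff.mp (star_mem hy)) A hA
  have key : ∀ (w : H →L[ℂ] H), A * w = w * A → ∀ z ∈ K, w z ∈ K := by
    intro w hw z hz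
    have hmapsto : Set.MapsTo w (LinearMap.range (A : H →ₗ[ℂ] H) : Set H) (LinearMap.range (A : H →ₗ[ℂ] H) : Set H) := by
      rintro _ ⟨x, rfl⟩
      refine ⟨w x, ?_⟩
      have := congrArg (fun T : H →L[ℂ] H => T x) hw
      simpa using this
    have hz' : z ∈ closure ((LinearMap.range (A : H →ₗ[ℂ] H) : Submodule ℂ H) : Set H) := hz
    exact map_mem_closure w.continuous hz' hmapsto
  exact projK_commute (isSelfAdjoint_starProjection K)
    (key y hyA) (key (star y) hysA)

end vN

/-- In a von Neumann algebra, the compression of any element by a minimal projection is a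
scalar multiple of the projection (self-adjoint case). -/
lemma scalar_of_minimal_selfAdjoint (𝔄 : VonNeumannAlgebra H) {Q : H →L[ℂ] H}
    (hQ : IsMinimalProjectionIn 𝔄 Q) {b : H →L[ℂ] H} (hbmem : b ∈ 𝔄)
    (hbsa : IsSelfAdjoint b) (hQb : Q * b = b) (hbQ : b * Q = b) :
    ∃ r : ℝ, b = (r : ℂ) • Q := by
  obtain ⟨⟨hQsa, hQidem⟩, hQmem, hQne, hQmin⟩ := hQ
  haveI : Nontrivial H := by
    have : ∃ x, Q x ≠ 0 := by
      by_contra hcon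
      push_neg at hcon
      exact hQne (ContinuousLinearMap.ext fun x => by simpa using hcon x)
    obtain ⟨x, hx⟩ := this
    exact ⟨Q x, 0, hx⟩
  haveI : Nontrivial (H →L[ℂ] H) := by
    obtain ⟨v, hv⟩ := exists_ne (0 : H)
    exact ⟨1, 0, fun hcon => hv (by simpa using congrArg (fun T : H →L[ℂ] H => T v) hcon)⟩
  by_cases htwo : ∃ l1 ∈ spectrum ℝ b, ∃ l2 ∈ spectrum ℝ b, l1 ≠ l2 ∧ l1 ≠ 0 ∧ l2 ≠ 0
  · exfalso
    obtain ⟨l1, hl1, l2, hl2, hne, h1ne, h2ne⟩ := htwo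
    set δ : ℝ := |l1 - l2| / 2 with hδdef
    have hδpos : 0 < δ := by
      have : 0 < |l1 - l2| := abs_pos.mpr (sub_ne_zero.mpr hne)
      positivity
    set h1f : ℝ → ℝ := fun t => max 0 (1 - |t - l1| / δ) with h1fdef
    set h2f : ℝ → ℝ := fun t => max 0 (1 - |t - l2| / δ) with h2fdef
    have hcont1 : Continuous h1f :=
      continuous_const.max (continuous_const.sub
        (((continuous_id.sub continuous_const).abs).div_const δ))
    have hcont2 : Continuous h2f :=
      continuous_const.max (continuous_const.sub
        (((continuous_id.sub continuous_const).abs).div_const δ))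
    have hzero1 : ∀ t, δ ≤ |t - l1| → h1f t = 0 := by
      intro t ht
      simp only [h1fdef]
      rw [max_eq_left]
      rw [sub_nonpos]
      exact (one_le_div hδpos).mpr ht
    have hzero2 : ∀ t, δ ≤ |t - l2| → h2f t = 0 := by
      intro t ht
      simp only [h2fdef]
      rw [max_eq_left]
      rw [sub_nonpos]
      exact (one_le_div hδpos).mpr ht
    have hdisjf : ∀ t, h1f t * h2f t = 0 := by
      intro t
      by_cases h : δ ≤ |t - l1|
      · rw [hzero1 t h, zero_mul]
      · have habs : |l1 - l2| ≤ |l1 - t| + |t - l2| := abs_sub_le l1 t l2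
        rw [abs_sub_comm l1 t] at habs
        have : δ ≤ |t - l2| := by
          push_neg at h
          rw [hδdef] at *
          linarith
        rw [hzero2 t this, mul_zero]
    have hval1 : h1f l1 = 1 := by
      simp [h1fdef]
    have hval2 : h2f l2 = 1 := by
      simp [h2fdef]
    set f1 : ℝ → ℝ := fun t => t * h1f t with f1def
    set f2 : ℝ → ℝ := fun t => t * h2f t with f2def
    have hcf1 : Continuous f1 := continuous_id.mul hcont1
    have hcf2 : Continuous f2 := continuous_id.mul hcont2
    set c1 := cfc f1 b with c1def
    set c2 := cfc f2 b with c2def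
    have hc1 : c1 = b * cfc h1f b := by
      have h := cfc_mul (R := ℝ) (fun t : ℝ => t) h1f b
        (continuous_id.continuousOn) (hcont1.continuousOn)
      rw [cfc_id' ℝ b] at h
      exact h
    have hc2 : c2 = b * cfc h2f b := by
      have h := cfc_mul (R := ℝ) (fun t : ℝ => t) h2f b
        (continuous_id.continuousOn) (hcont2.continuousOn)
      rw [cfc_id' ℝ b] at h
      exact h
    have hc1' : c1 = cfc h1f b * b := by
      have h := cfc_mul (R := ℝ) h1f (fun t : ℝ => t) b
        (hcont1.continuousOn) (continuous_id.continuousOn)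
      rw [cfc_id' ℝ b] at h
      rw [c1def, cfc_congr (g := fun t => h1f t * t) (fun x _ => mul_comm x (h1f x))]
      exact h
    have hc2' : c2 = cfc h2f b * b := by
      have h := cfc_mul (R := ℝ) h2f (fun t : ℝ => t) b
        (hcont2.continuousOn) (continuous_id.continuousOn)
      rw [cfc_id' ℝ b] at h
      rw [c2def, cfc_congr (g := fun t => h2f t * t) (fun x _ => mul_comm x (h2f x))]
      exact h
    have hQc1 : Q * c1 = c1 := by rw [hc1, ← mul_assoc, hQb]
    have hQc2 : Q * c2 = c2 := by rw [hc2, ← mul_assoc, hQb]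
    have hc1Q : c1 * Q = c1 := by rw [hc1', mul_assoc, hbQ, ← hc1']
    have hc2Q : c2 * Q = c2 := by rw [hc2', mul_assoc, hbQ, ← hc2']
    have hc1mem : c1 ∈ 𝔄 := by rw [hc1]; exact mul_mem hbmem (cfc_mem_vN 𝔄 hbmem hbsa h1f)
    have hc2mem : c2 ∈ 𝔄 := by rw [hc2]; exact mul_mem hbmem (cfc_mem_vN 𝔄 hbmem hbsa h2f)
    have hc1sa : IsSelfAdjoint c1 := cfc_predicate f1 b
    have hc2sa : IsSelfAdjoint c2 := cfc_predicate f2 b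
    have hc1ne : c1 ≠ 0 := by
      intro hcon
      have hspec := cfc_map_spectrum (R := ℝ) f1 b (hf := hcf1.continuousOn) (ha := hbsa)
      have hl : f1 l1 ∈ spectrum ℝ c1 := by rw [c1def, hspec]; exact ⟨l1, hl1, rfl⟩
      rw [hcon, spectrum.zero_eq] at hl
      apply h1ne
      have : f1 l1 = l1 := by rw [f1def]; simp [hval1]
      rw [this] at hl
      simpa using hl
    have hc2ne : c2 ≠ 0 := by
      intro hcon
      have hspec := cfc_map_spectrum (R := ℝ) f2 b (hf := hcf2.continuousOn) (ha := hbsa)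
      have hl : f2 l2 ∈ spectrum ℝ c2 := by rw [c2def, hspec]; exact ⟨l2, hl2, rfl⟩
      rw [hcon, spectrum.zero_eq] at hl
      apply h2ne
      have : f2 l2 = l2 := by rw [f2def]; simp [hval2]
      rw [this] at hl
      simpa using hl
    have hc12 : c1 * c2 = 0 := by
      have h := cfc_mul (R := ℝ) f1 f2 b (hcf1.continuousOn) (hcf2.continuousOn)
      have hzero : (fun x => f1 x * f2 x) = fun _ : ℝ => (0 : ℝ) := by
        funext t
        simp only [f1def, f2def]
        rw [mul_mul_mul_comm, hdisjf t, mul_zero]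
      rw [hzero] at h
      rw [← h]
      simpa using cfc_const (0 : ℝ) b
    -- range projections
    have hcontradict : ∀ c : H →L[ℂ] H, c ∈ 𝔄 → c ≠ 0 → Q * c = c → c * Q = c →
        LinearMap.range (Q : H →ₗ[ℂ] H) = (LinearMap.range (c : H →ₗ[ℂ] H)).topologicalClosure := by
      intro c hcmem hcne hQc hcQ
      haveI : CompleteSpace ((LinearMap.range (c : H →ₗ[ℂ] H)).topologicalClosure) :=
        (Submodule.isClosed_topologicalClosure _).completeSpace_coe
      set r := projK ((LinearMap.range (c : H →ₗ[ℂ] H)).topologicalClosure) with hrdef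
      have hrmem : r ∈ 𝔄 := rangeProj_mem 𝔄 hcmem
      have hrproj : IsProjectionCLM r := projK_isProjection _
      have hrrange : LinearMap.range (r : H →ₗ[ℂ] H) = (LinearMap.range (c : H →ₗ[ℂ] H)).topologicalClosure :=
        projK_range _
      have hrle : LinearMap.range (r : H →ₗ[ℂ] H) ≤ LinearMap.range (Q : H →ₗ[ℂ] H) := by
        rw [hrrange]
        apply Submodule.topologicalClosure_minimal
        · rintro _ ⟨x, rfl⟩
          refine ⟨c x, ?_⟩
          have := congrArg (fun T : H →L[ℂ] H => T x) hQc
          simpa using this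
        · exact isClosed_range hQidem
      have hrne : r ≠ 0 := by
        intro hcon
        obtain ⟨x, hx⟩ : ∃ x, c x ≠ 0 := by
          by_contra hc
          push_neg at hc
          exact hcne (ContinuousLinearMap.ext fun x => by simpa using hc x)
        apply hx
        have hmem : c x ∈ (LinearMap.range (c : H →ₗ[ℂ] H)).topologicalClosure :=
          Submodule.le_topologicalClosure _ ⟨x, rfl⟩
        have := projK_apply_of_mem hmem
        rw [← hrdef, hcon] at this
        simpa using this.symm
      rcases hQmin r hrproj hrmem hrle with hcon | heq
      · exact absurd hcon hrne
      · rw [← hrrange, heq]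
    have h1r := hcontradict c1 hc1mem hc1ne hQc1 hc1Q
    have h2r := hcontradict c2 hc2mem hc2ne hQc2 hc2Q
    -- c1 vanishes on range Q, but c1 * Q = c1
    have hker : LinearMap.range (Q : H →ₗ[ℂ] H) ≤ LinearMap.ker (c1 : H →ₗ[ℂ] H) := by
      rw [h2r]
      apply Submodule.topologicalClosure_minimal
      · rintro _ ⟨x, rfl⟩
        have := congrArg (fun T : H →L[ℂ] H => T x) hc12
        simpa using this
      · exact ContinuousLinearMap.isClosed_ker _
    apply hc1ne
    ext x
    have h1 : c1 (Q x) = 0 := hker ⟨x, rfl⟩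
    have h2 := congrArg (fun T : H →L[ℂ] H => T x) hc1Q
    simp only [ContinuousLinearMap.mul_apply] at h2
    rw [ContinuousLinearMap.zero_apply, ← h2, h1]
  · push_neg at htwo
    by_cases h0 : ∃ l ∈ spectrum ℝ b, l ≠ 0
    · obtain ⟨l0, hl0mem, hl0⟩ := h0
      have hS : ∀ x ∈ spectrum ℝ b, x * (x - l0) = 0 := by
        intro x hx
        rcases eq_or_ne x 0 with rfl | hx0
        · rw [zero_mul]
        · have : x = l0 := by
            by_contra hxl
            exact hl0 (htwo x hx l0 hl0mem hxl hx0)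
          rw [this, sub_self, mul_zero]
      have hb2 : b * b - l0 • b = 0 := by
        have h1 : cfc (fun x : ℝ => x * (x - l0)) b = 0 := by
          rw [cfc_congr (g := fun _ => (0:ℝ)) hS]
          simpa using cfc_const (0 : ℝ) b
        have h2 : cfc (fun x : ℝ => x * (x - l0)) b = b * b - l0 • b := by
          have hmul : cfc (fun x : ℝ => x * x) b = b * b := by
            have h := cfc_mul (R := ℝ) (fun t : ℝ => t) (fun t : ℝ => t) b
              (continuous_id.continuousOn) (continuous_id.continuousOn)
            rw [cfc_id' ℝ b] at h
            exact h
          have hsm : cfc (fun x : ℝ => l0 * x) b = l0 • b := by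
            have h := cfc_const_mul (R := ℝ) l0 (fun t : ℝ => t) b
              (continuous_id.continuousOn)
            rw [cfc_id' ℝ b] at h
            exact h
          calc cfc (fun x : ℝ => x * (x - l0)) b
              = cfc (fun x : ℝ => x * x - l0 * x) b := cfc_congr fun x _ => by ring
            _ = cfc (fun x : ℝ => x * x) b - cfc (fun x : ℝ => l0 * x) b :=
                cfc_sub _ _ b ((continuous_id.mul continuous_id).continuousOn)
                  ((continuous_const.mul continuous_id).continuousOn)
            _ = b * b - l0 • b := by rw [hmul, hsm]
        rw [← h2, h1]
      have hb2' : b * b = (l0 : ℂ) • b := by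
        have : b * b = l0 • b := by rwa [sub_eq_zero] at hb2
        rw [this, Complex.coe_smul]
      set e : H →L[ℂ] H := (l0 : ℂ)⁻¹ • b with hedef
      have hl0C : (l0 : ℂ) ≠ 0 := Complex.ofReal_ne_zero.mpr hl0
      have heb : b = (l0 : ℂ) • e := by
        rw [hedef, smul_smul, mul_inv_cancel₀ hl0C, one_smul]
      have hesa : IsSelfAdjoint e := by
        rw [hedef]
        rw [IsSelfAdjoint, star_smul, hbsa.star_eq]
        congr 1
        rw [star_inv₀]
        exact congrArg Inv.inv (Complex.conj_ofReal l0)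
      have heidem : IsIdempotentElem e := by
        rw [IsIdempotentElem, hedef, smul_mul_smul_comm, hb2', smul_smul]
        congr 1
        field_simp
      have hemem : e ∈ 𝔄 := by
        rw [hedef]
        exact 𝔄.toStarSubalgebra.smul_mem hbmem _
      have herange : LinearMap.range (e : H →ₗ[ℂ] H) ≤ LinearMap.range (Q : H →ₗ[ℂ] H) := by
        rintro _ ⟨x, rfl⟩
        refine ⟨e x, ?_⟩
        have hQe : Q * e = e := by rw [hedef, mul_smul_comm, hQb]
        have := congrArg (fun T : H →L[ℂ] H => T x) hQe
        simpa using this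
      rcases hQmin e ⟨hesa, heidem⟩ hemem herange with hcon | heq
      · exact ⟨0, by rw [heb, hcon, smul_zero]; simp⟩
      · exact ⟨l0, by rw [heb, heq]⟩
    · push_neg at h0
      refine ⟨0, ?_⟩
      have hbz : b = 0 := by
        calc b = cfc (fun x : ℝ => x) b := (cfc_id' ℝ b).symm
          _ = cfc (fun _ : ℝ => (0 : ℝ)) b := cfc_congr fun x hx => h0 x hx
          _ = 0 := by simpa using cfc_const (0 : ℝ) b
      rw [hbz]
      simp


/-- In a von Neumann algebra, the compression of any element by a minimal projection is a
scalar multiple of the projection. -/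
lemma scalar_of_minimal (𝔄 : VonNeumannAlgebra H) {Q : H →L[ℂ] H}
    (hQ : IsMinimalProjectionIn 𝔄 Q) (a : H →L[ℂ] H) (ha : a ∈ 𝔄) :
    ∃ lam : ℂ, Q * a * Q = lam • Q := by
  obtain ⟨⟨hQsa, hQidem⟩, hQmem, hQne, hQmin⟩ := hQ
  set x : H →L[ℂ] H := ((1 : ℂ)/2) • (a + star a) with hxdef
  set y : H →L[ℂ] H := (-(Complex.I)/2) • (a - star a) with hydef
  have hxsa : IsSelfAdjoint x := by
    rw [IsSelfAdjoint, hxdef, star_smul, star_add, star_star, add_comm (star a) a]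
    congr 1
    simp [Complex.star_def, Complex.ext_iff]
  have hysa : IsSelfAdjoint y := by
    rw [IsSelfAdjoint, hydef, star_smul, star_sub, star_star]
    rw [show star (-(Complex.I)/2) = Complex.I/2 by
      simp [Complex.star_def, Complex.ext_iff]]
    rw [show star a - a = -(a - star a) by abel, smul_neg, ← neg_smul, neg_div]
  have hxy : a = x + Complex.I • y := by
    rw [hxdef, hydef, smul_smul]
    rw [show Complex.I * (-(Complex.I)/2) = (1:ℂ)/2 by
      rw [← mul_div_assoc, mul_neg, Complex.I_mul_I, neg_neg]]
    module
  have hxmem : x ∈ 𝔄 := 𝔄.toStarSubalgebra.smul_mem (add_mem ha (star_mem ha)) _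
  have hymem : y ∈ 𝔄 := 𝔄.toStarSubalgebra.smul_mem (sub_mem ha (star_mem ha)) _
  have compress : ∀ w : H →L[ℂ] H, w ∈ 𝔄 → IsSelfAdjoint w → ∃ r : ℝ,
      Q * w * Q = (r : ℂ) • Q := by
    intro w hwmem hwsa
    have h1 : Q * (Q * w * Q) = Q * w * Q := by
      rw [show Q * (Q * w * Q) = (Q * Q) * w * Q by noncomm_ring, hQidem]
    have h2 : (Q * w * Q) * Q = Q * w * Q := by
      rw [show Q * w * Q * Q = Q * w * (Q * Q) by noncomm_ring, hQidem]
    have hsa : IsSelfAdjoint (Q * w * Q) := by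
      rw [IsSelfAdjoint, star_mul, star_mul, hQsa.star_eq, hwsa.star_eq, mul_assoc]
    have hmem : Q * w * Q ∈ 𝔄 := mul_mem (mul_mem hQmem hwmem) hQmem
    exact scalar_of_minimal_selfAdjoint 𝔄 ⟨⟨hQsa, hQidem⟩, hQmem, hQne, hQmin⟩
      hmem hsa h1 h2
  obtain ⟨r1, hr1⟩ := compress x hxmem hxsa
  obtain ⟨r2, hr2⟩ := compress y hymem hysa
  refine ⟨(r1 : ℂ) + Complex.I * r2, ?_⟩
  calc Q * a * Q = Q * (x + Complex.I • y) * Q := by rw [← hxy]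
    _ = Q * x * Q + Complex.I • (Q * y * Q) := by
        rw [mul_add, add_mul]
        congr 1
        rw [mul_smul_comm, smul_mul_assoc]
    _ = (r1 : ℂ) • Q + Complex.I • ((r2 : ℂ) • Q) := by rw [hr1, hr2]
    _ = ((r1 : ℂ) + Complex.I * r2) • Q := by rw [smul_smul, ← add_smul]

/-- Compressions by `P` are scalar, given a minimal `Q` with `P Q H` dense in `range P`. -/
lemma PaP_scalar (𝔄 : VonNeumannAlgebra H) {Q P : H →L[ℂ] H}
    (hQmin : IsMinimalProjectionIn 𝔄 Q)
    (hPproj : IsProjectionCLM P) (hPmem : P ∈ 𝔄) (hPQne : P * Q ≠ 0)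
    (hdense : (LinearMap.range ((P * Q : H →L[ℂ] H) : H →ₗ[ℂ] H)).topologicalClosure = LinearMap.range (P : H →ₗ[ℂ] H)) :
    ∀ a ∈ 𝔄, ∃ lam : ℂ, P * a * P = lam • P := by
  intro a ha
  have hQsa := hQmin.1.1
  have hQidem := hQmin.1.2
  obtain ⟨μ, hμ⟩ := scalar_of_minimal 𝔄 hQmin P hPmem
  have hμne : μ ≠ 0 := by
    intro h0
    rw [h0, zero_smul] at hμ
    apply hPQne
    rw [← CStarRing.star_mul_self_eq_zero_iff, star_mul, hQsa.star_eq, hPproj.1.star_eq]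
    rw [show Q * P * (P * Q) = Q * (P * P) * Q by noncomm_ring, hPproj.2]
    exact hμ
  obtain ⟨lam, hlam⟩ := scalar_of_minimal 𝔄 hQmin (P * a * P) (mul_mem (mul_mem hPmem ha) hPmem)
  set c : H →L[ℂ] H := P * a * P - (lam/μ) • P with hcdef
  have hPP : P * P = P := hPproj.2
  have habs : ∀ Y : H →L[ℂ] H, P * (P * Y) = P * Y := fun Y => by
    rw [← mul_assoc, hPP]
  have hkey : star (P * Q) * c * (P * Q) = 0 := by
    have h1 : star (P * Q) * c * (P * Q)
        = Q * (P * (a * (P * Q))) - (lam/μ) • (Q * (P * Q)) := by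
      rw [star_mul, hQsa.star_eq, hPproj.1.star_eq, hcdef]
      simp only [mul_sub, sub_mul, smul_mul_assoc, mul_smul_comm, mul_assoc, habs, hPP]
    have h2 : Q * (P * a * P) * Q = Q * (P * (a * (P * Q))) := by
      simp only [mul_assoc]
    have h3 : Q * P * Q = Q * (P * Q) := by simp only [mul_assoc]
    rw [h1, ← h2, ← h3, hlam, hμ, smul_smul, div_mul_cancel₀ _ hμne, sub_self]
  -- pointwise version
  have hstep0 : ∀ v w : H, ⟪(P * Q) v, c ((P * Q) w)⟫_ℂ = 0 := by
    intro v w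
    have h := ContinuousLinearMap.adjoint_inner_right (P * Q) v (c ((P * Q) w))
    rw [← h]
    have h2 : (ContinuousLinearMap.adjoint (P * Q)) (c ((P * Q) w))
        = (star (P * Q) * c * (P * Q)) w := by
      rw [← ContinuousLinearMap.star_eq_adjoint]
      rfl
    rw [h2, hkey]
    simp
  have closure_vanish : ∀ z : H, (∀ v : H, ⟪z, (P * Q) v⟫_ℂ = 0) →
      ∀ u ∈ LinearMap.range (P : H →ₗ[ℂ] H), ⟪z, u⟫_ℂ = 0 := by
    intro z hz u hu
    have hle : LinearMap.range ((P * Q : H →L[ℂ] H) : H →ₗ[ℂ] H) ≤ LinearMap.ker (innerSL ℂ z : H →ₗ[ℂ] ℂ) := by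
      rintro _ ⟨v, rfl⟩
      rw [LinearMap.mem_ker]
      simpa [innerSL_apply_apply] using hz v
    have hle2 : LinearMap.range (P : H →ₗ[ℂ] H) ≤ LinearMap.ker (innerSL ℂ z : H →ₗ[ℂ] ℂ) := by
      rw [← hdense]
      exact Submodule.topologicalClosure_minimal _ hle (ContinuousLinearMap.isClosed_ker _)
    have := hle2 hu
    rw [LinearMap.mem_ker] at this
    simpa [innerSL_apply_apply] using this
  have hstep1 : ∀ w : H, ∀ u ∈ LinearMap.range (P : H →ₗ[ℂ] H), ⟪u, c ((P * Q) w)⟫_ℂ = 0 := by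
    intro w u hu
    rw [inner_eq_zero_symm]
    apply closure_vanish
    · intro v
      rw [inner_eq_zero_symm]
      exact hstep0 v w
    · exact hu
  have hstep2 : ∀ u ∈ LinearMap.range (P : H →ₗ[ℂ] H), ∀ v ∈ LinearMap.range (P : H →ₗ[ℂ] H), ⟪u, c v⟫_ℂ = 0 := by
    intro u hu v hv
    have hadj : ∀ t : H, ⟪u, c t⟫_ℂ = ⟪(star c) u, t⟫_ℂ := by
      intro t
      rw [ContinuousLinearMap.star_eq_adjoint, ContinuousLinearMap.adjoint_inner_left]
    rw [hadj]
    apply closure_vanish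
    · intro w
      rw [← hadj]
      exact hstep1 w u hu
    · exact hv
  have hcPcP : P * c * P = c := by
    rw [hcdef]
    simp only [mul_sub, sub_mul, smul_mul_assoc, mul_smul_comm, mul_assoc, habs, hPP]
  have hzero : c = 0 := by
    ext v
    rw [ContinuousLinearMap.zero_apply]
    apply ext_inner_left ℂ
    intro u
    rw [inner_zero_right]
    have hv : c v = P (c (P v)) := by
      simpa using (congrArg (fun T : H →L[ℂ] H => T v) hcPcP).symm
    rw [hv]
    rw [show ⟪u, P (c (P v))⟫_ℂ = ⟪P u, c (P v)⟫_ℂ from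
      (inner_selfadj hPproj.1 u (c (P v))).symm]
    exact hstep2 _ ⟨u, rfl⟩ _ ⟨v, rfl⟩
  refine ⟨lam/μ, ?_⟩
  rw [hcdef] at hzero
  exact sub_eq_zero.mp hzero

end OMPAux

open OMPAux

/-- Let `q 0, …, q (n-1)` be projections in a von Neumann algebra `𝔄` such that for each
`i ≥ 1` the closed subspace spanned by `range (q 0), …, range (q (i-1))` meets `range (q i)`
trivially.  Let `s i ∈ 𝔄` be the orthogonal projection onto the closed subspace spanned by
`range (q 0), …, range (q i)`, and let `p 0 = q 0`, `p i = s i - s (i-1)` for `i ≥ 1`.  Then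
the `p i` are pairwise orthogonal projections of `𝔄` with `∑ p i = s (n-1)`, and if every
`q i` is a minimal projection of `𝔄` then so is every `p i`. -/
theorem orthogonalize_minimal_projections
    (𝔄 : VonNeumannAlgebra H) (n : ℕ) (hn : 0 < n)
    (q s p : ℕ → (H →L[ℂ] H))
    (hq : ∀ i < n, IsProjectionCLM (q i) ∧ q i ∈ 𝔄)
    (hdisj : ∀ i, 0 < i → i < n →
      (⨆ j : ℕ, ⨆ _ : j < i, LinearMap.range (q j : H →ₗ[ℂ] H)).topologicalClosure ⊓
        LinearMap.range (q i : H →ₗ[ℂ] H) = ⊥)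
    (hs : ∀ i < n, IsProjectionCLM (s i) ∧ s i ∈ 𝔄 ∧
      LinearMap.range (s i : H →ₗ[ℂ] H)
        = (⨆ j : ℕ, ⨆ _ : j ≤ i, LinearMap.range (q j : H →ₗ[ℂ] H)).topologicalClosure)
    (hp0 : p 0 = q 0)
    (hpi : ∀ i, 0 < i → i < n → p i = s i - s (i - 1)) :
    (∀ i < n, IsProjectionCLM (p i) ∧ p i ∈ 𝔄) ∧
    (∀ i < n, ∀ j < n, i ≠ j → p i * p j = 0) ∧
    (∑ i ∈ Finset.range n, p i) = s (n - 1) ∧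
    ((∀ i < n, IsMinimalProjectionIn 𝔄 (q i)) →
      ∀ i < n, IsMinimalProjectionIn 𝔄 (p i)) := by
  classical
  have hrange_mono : ∀ j i, j ≤ i → i < n →
      LinearMap.range (s j : H →ₗ[ℂ] H) ≤ LinearMap.range (s i : H →ₗ[ℂ] H) := by
    intro j i hji hi
    rw [(hs j (lt_of_le_of_lt hji hi)).2.2, (hs i hi).2.2]
    apply Submodule.topologicalClosure_mono
    exact iSup_mono fun k => iSup_le fun hk => le_iSup_of_le (hk.trans hji) le_rfl
  have hss : ∀ j i, j ≤ i → i < n → s i * s j = s j ∧ s j * s i = s j := fun j i hji hi =>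
    comp_eq_of_range_le (hs j (lt_of_le_of_lt hji hi)).1 (hs i hi).1 (hrange_mono j i hji hi)
  have hq0 : q 0 = s 0 := by
    apply projection_eq_of_range_eq (hq 0 hn).1 (hs 0 hn).1
    rw [(hs 0 hn).2.2]
    have h1 : (⨆ j : ℕ, ⨆ _ : j ≤ 0, LinearMap.range (q j : H →ₗ[ℂ] H)) = LinearMap.range (q 0 : H →ₗ[ℂ] H) := by
      apply le_antisymm
      · exact iSup_le fun j => iSup_le fun hj => by rw [Nat.le_zero.mp hj]
      · exact le_iSup_of_le 0 (le_iSup_of_le (le_refl 0) le_rfl)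
    rw [h1, IsClosed.submodule_topologicalClosure_eq (isClosed_range (hq 0 hn).1.2)]
  -- part 1
  have part1 : ∀ i < n, IsProjectionCLM (p i) ∧ p i ∈ 𝔄 := by
    intro i hi
    rcases Nat.eq_zero_or_pos i with rfl | hipos
    · rw [hp0]; exact hq 0 hn
    · rw [hpi i hipos hi]
      have hi1 : i - 1 < n := lt_of_le_of_lt (Nat.sub_le i 1) hi
      obtain ⟨h1, h2⟩ := hss (i-1) i (Nat.sub_le i 1) hi
      refine ⟨⟨(hs i hi).1.1.sub (hs (i-1) hi1).1.1, ?_⟩,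
        sub_mem (hs i hi).2.1 (hs (i-1) hi1).2.1⟩
      show (s i - s (i-1)) * (s i - s (i-1)) = s i - s (i-1)
      rw [sub_mul, mul_sub, mul_sub, (hs i hi).1.2, h1, h2, (hs (i-1) hi1).1.2]
      simp
  -- orthogonality
  have horth : ∀ i j, i < j → j < n → p i * p j = 0 := by
    intro i j hij hj
    have hjpos : 0 < j := by omega
    have hj1 : j - 1 < n := by omega
    rw [hpi j hjpos hj]
    rcases Nat.eq_zero_or_pos i with rfl | hipos
    · rw [hp0, hq0, mul_sub, (hss 0 j (by omega) hj).2, (hss 0 (j-1) (by omega) hj1).2,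
        sub_self]
    · have hi : i < n := by omega
      rw [hpi i hipos hi, sub_mul, mul_sub, mul_sub,
        (hss i j (by omega) hj).2, (hss i (j-1) (by omega) hj1).2,
        (hss (i-1) j (by omega) hj).2, (hss (i-1) (j-1) (by omega) hj1).2]
      simp
  have horth' : ∀ i j, i < n → j < n → i ≠ j → p i * p j = 0 := by
    intro i j hi hj hne
    rcases lt_or_gt_of_ne hne with h | h
    · exact horth i j h hj
    · have h0 := horth j i h hi
      have := congrArg star h0
      rwa [star_mul, (part1 i hi).1.1.star_eq, (part1 j hj).1.1.star_eq, star_zero] at this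
  -- part 3
  have part3 : (∑ k ∈ Finset.range n, p k) = s (n-1) := by
    have key : ∀ m, 0 < m → m ≤ n → (∑ k ∈ Finset.range m, p k) = s (m-1) := by
      intro m
      induction m with
      | zero => omega
      | succ m ih =>
        intro _ hmn
        rcases Nat.eq_zero_or_pos m with rfl | hm
        · simp [hp0, hq0]
        · rw [Finset.sum_range_succ, ih hm (by omega), hpi m hm (by omega),
            Nat.add_sub_cancel]
          abel
    exact key n hn le_rfl
  refine ⟨part1, fun i hi j hj hne => horth' i j hi hj hne, part3, ?_⟩
  -- part 4 : minimality
  intro hmin i hi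
  rcases Nat.eq_zero_or_pos i with rfl | hipos
  · rw [hp0]; exact hmin 0 hn
  · have hi1 : i - 1 < n := by omega
    have hQmin := hmin i hi
    have hQproj : IsProjectionCLM (q i) := hQmin.1
    have hQne : q i ≠ 0 := hQmin.2.2.1
    have hPeq : p i = s i - s (i-1) := hpi i hipos hi
    have hPproj : IsProjectionCLM (p i) := (part1 i hi).1
    have hPmem : p i ∈ 𝔄 := (part1 i hi).2
    have hSproj : IsProjectionCLM (s (i-1)) := (hs (i-1) hi1).1
    have hSiproj : IsProjectionCLM (s i) := (hs i hi).1
    obtain ⟨hSiS, hSSi⟩ := hss (i-1) i (by omega) hi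
    have hMeq : LinearMap.range (s (i-1) : H →ₗ[ℂ] H)
        = (⨆ j : ℕ, ⨆ _ : j < i, LinearMap.range (q j : H →ₗ[ℂ] H)).topologicalClosure := by
      rw [(hs (i-1) hi1).2.2]
      congr 1
      apply iSup_congr
      intro j
      rw [show (j ≤ i - 1) = (j < i) from propext ⟨fun h => by omega, fun h => by omega⟩]
    have hMN : LinearMap.range (s (i-1) : H →ₗ[ℂ] H) ⊓ LinearMap.range (q i : H →ₗ[ℂ] H) = ⊥ := by
      rw [hMeq]; exact hdisj i hipos hi
    have hQle : LinearMap.range (q i : H →ₗ[ℂ] H) ≤ LinearMap.range (s i : H →ₗ[ℂ] H) := by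
      rw [(hs i hi).2.2]
      exact le_trans
        (le_iSup_of_le i (le_iSup (fun _ : i ≤ i => LinearMap.range (q i : H →ₗ[ℂ] H)) le_rfl))
        (Submodule.le_topologicalClosure _)
    obtain ⟨hSiQ, hQSi⟩ := comp_eq_of_range_le hQproj hSiproj hQle
    have hSP : s (i-1) * p i = 0 := by
      rw [hPeq, mul_sub, hSSi, hSproj.2.eq, sub_self]
    have hPQ : p i * q i = q i - s (i-1) * q i := by
      rw [hPeq, sub_mul, hSiQ]
    have hNne : LinearMap.range (q i : H →ₗ[ℂ] H) ≠ ⊥ := ne_zero_of_range_ne_bot hQne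
    have hrange_not_le : ¬ LinearMap.range (q i : H →ₗ[ℂ] H) ≤ LinearMap.range (s (i-1) : H →ₗ[ℂ] H) := by
      intro hle
      apply hNne
      have h := hMN
      rw [inf_eq_right.mpr hle] at h
      exact h
    have hPQne : p i * q i ≠ 0 := by
      intro h
      apply hrange_not_le
      have hQS : q i = s (i-1) * q i := by
        have := hPQ
        rw [h] at this
        exact sub_eq_zero.mp this.symm
      rintro _ ⟨x, rfl⟩
      exact ⟨q i x, (congrArg (fun T : H →L[ℂ] H => T x) hQS).symm⟩
    have hPne : p i ≠ 0 := by
      intro h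
      exact hPQne (by rw [h, zero_mul])
    -- density of range (p i * q i) in range (p i)
    have hPQrange_le : LinearMap.range ((p i * q i : H →L[ℂ] H) : H →ₗ[ℂ] H) ≤ LinearMap.range (p i : H →ₗ[ℂ] H) := by
      rintro _ ⟨x, rfl⟩
      exact ⟨q i x, rfl⟩
    have hdense : (LinearMap.range ((p i * q i : H →L[ℂ] H) : H →ₗ[ℂ] H)).topologicalClosure
        = LinearMap.range (p i : H →ₗ[ℂ] H) := by
      apply le_antisymm
      · exact Submodule.topologicalClosure_minimal _ hPQrange_le (isClosed_range hPproj.2)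
      · intro w hw
        haveI : CompleteSpace ((LinearMap.range ((p i * q i : H →L[ℂ] H) : H →ₗ[ℂ] H)).topologicalClosure) :=
          (Submodule.isClosed_topologicalClosure _).completeSpace_coe
        set D := (LinearMap.range ((p i * q i : H →L[ℂ] H) : H →ₗ[ℂ] H)).topologicalClosure with hD
        set z := w - projK D w with hzdef
        have hDle : D ≤ LinearMap.range (p i : H →ₗ[ℂ] H) :=
          Submodule.topologicalClosure_minimal _ hPQrange_le (isClosed_range hPproj.2)
        have hzD : ∀ d ∈ D, ⟪d, z⟫_ℂ = 0 := by
          have hmem : z ∈ Dᗮ := by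
            rw [hzdef]
            exact Submodule.sub_starProjection_mem_orthogonal (K := D) w
          exact fun d hd => (Submodule.mem_orthogonal D z).mp hmem d hd
        have hzP : z ∈ LinearMap.range (p i : H →ₗ[ℂ] H) :=
          Submodule.sub_mem _ hw (hDle (projK_mem_K D w))
        have hzfix : p i z = z := apply_eq_self hPproj.2 hzP
        have hSz : s (i-1) z = 0 := by
          have h := congrArg (fun T : H →L[ℂ] H => T z) hSP
          simp only [ContinuousLinearMap.mul_apply, ContinuousLinearMap.zero_apply] at h
          rwa [hzfix] at h
        have hzQ : ∀ x, ⟪q i x, z⟫_ℂ = 0 := by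
          intro x
          have hm : (p i * q i) x ∈ D := Submodule.le_topologicalClosure _ ⟨x, rfl⟩
          have h0 := hzD _ hm
          calc ⟪q i x, z⟫_ℂ = ⟪q i x, p i z⟫_ℂ := by rw [hzfix]
            _ = ⟪p i (q i x), z⟫_ℂ := (inner_selfadj hPproj.1 (q i x) z).symm
            _ = 0 := h0
        have hzS : ∀ x, ⟪s (i-1) x, z⟫_ℂ = 0 := fun x => by
          rw [inner_selfadj hSproj.1, hSz, inner_zero_right]
        have hsup : (⨆ j : ℕ, ⨆ _ : j ≤ i, LinearMap.range (q j : H →ₗ[ℂ] H))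
            ≤ LinearMap.ker (innerSL ℂ z : H →ₗ[ℂ] ℂ) := by
          refine iSup_le fun j => iSup_le fun hj => ?_
          rintro _ ⟨x, rfl⟩
          rw [LinearMap.mem_ker]
          rcases eq_or_lt_of_le hj with rfl | hjlt
          · rw [ContinuousLinearMap.coe_coe, innerSL_apply_apply]
            exact inner_eq_zero_symm.mp (hzQ x)
          · have hqj : q j x ∈ LinearMap.range (s (i-1) : H →ₗ[ℂ] H) := by
              rw [hMeq]
              refine Submodule.le_topologicalClosure _ ?_
              refine (le_iSup_of_le j
                (le_iSup (fun _ : j < i => LinearMap.range (q j : H →ₗ[ℂ] H)) hjlt) :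
                LinearMap.range (q j : H →ₗ[ℂ] H) ≤ ⨆ j : ℕ, ⨆ _ : j < i, LinearMap.range (q j : H →ₗ[ℂ] H)) ?_
              exact ⟨x, rfl⟩
            obtain ⟨y, hy⟩ := hqj
            rw [ContinuousLinearMap.coe_coe, innerSL_apply_apply, ContinuousLinearMap.coe_coe, ← hy]
            exact inner_eq_zero_symm.mp (hzS y)
        have hzKi : z ∈ LinearMap.range (s i : H →ₗ[ℂ] H) := by
          have hSiP : s i * p i = p i := by
            rw [hPeq, mul_sub, hSiproj.2.eq, hSiS]
          refine ⟨z, ?_⟩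
          have h := congrArg (fun T : H →L[ℂ] H => T z) hSiP
          simp only [ContinuousLinearMap.mul_apply] at h
          rw [hzfix] at h
          exact h
        have hz0 : z = 0 := by
          have h2 : LinearMap.range (s i : H →ₗ[ℂ] H) ≤ LinearMap.ker (innerSL ℂ z : H →ₗ[ℂ] ℂ) := by
            rw [(hs i hi).2.2]
            exact Submodule.topologicalClosure_minimal _ hsup
              (ContinuousLinearMap.isClosed_ker _)
          have h3 := h2 hzKi
          rw [LinearMap.mem_ker, ContinuousLinearMap.coe_coe, innerSL_apply_apply] at h3
          exact inner_self_eq_zero.mp h3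
        have hweq : w = projK D w := by
          have := hz0
          rw [hzdef] at this
          exact sub_eq_zero.mp this
        rw [hweq]
        exact projK_mem_K D w
    -- scalar lemma for p i
    have hPaP := PaP_scalar 𝔄 hQmin hPproj hPmem hPQne hdense
    refine ⟨hPproj, hPmem, hPne, ?_⟩
    intro e heproj hemem herange
    obtain ⟨lam, hlam⟩ := hPaP e hemem
    have hePe : p i * e * p i = e := by
      obtain ⟨h1, h2⟩ := comp_eq_of_range_le heproj hPproj herange
      rw [h1, h2]
    rw [hePe] at hlam
    have hidem := heproj.2.eq
    rw [hlam, smul_mul_smul_comm, hPproj.2.eq] at hidem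
    have hsub : (lam * lam - lam) • p i = 0 := by
      rw [sub_smul, hidem, sub_self]
    rcases smul_eq_zero.mp hsub with hl | hP0
    · have : lam * (lam - 1) = 0 := by ring_nf; ring_nf at hl; exact hl
      rcases mul_eq_zero.mp this with h | h
      · left; rw [hlam, h, zero_smul]
      · right; rw [hlam, sub_eq_zero.mp h, one_smul]
    · exact absurd hP0 hPne
end
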